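/- arXiv:2512.12125 — 5 statements merged into one kernel-verified Lean document; each statement's English description precedes it below -/
import Mathlib

section
/- Let x = 0 and let y be the D×(N−D) matrix over GF(q) with (1,1)-entry 1 and all other entries 0. For 1 ≤ i ≤ D, a matrix z satisfies rank(z) = i and rank(z−y) = i−1 if and only if rank(z) = i, rank(z−y) = i−1, rank(|z) = i−1, rank(z̄) = i−1, and rank(⌜z) = i−1 (i.e., the conditions rank(z)=i and rank(z−y)=i−1 force all three truncated ranks to equal i−1). -/
noncomputable section

open Matrix

/-- The `D × m` matrix with `(1,1)`-entry `1` and all other entries `0`. -/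
def yMat (F : Type) [Field F] (D m : ℕ) : Matrix (Fin D) (Fin m) F :=
  Matrix.of fun i j => if (i : ℕ) = 0 ∧ (j : ℕ) = 0 then 1 else 0

/-- `z` with its first column replaced by zeros. -/
def zeroCol {F : Type} [Field F] {D m : ℕ} (z : Matrix (Fin D) (Fin m) F) :
    Matrix (Fin D) (Fin m) F :=
  Matrix.of fun i j => if (j : ℕ) = 0 then 0 else z i j

/-- `z` with its first row replaced by zeros. -/
def zeroRow {F : Type} [Field F] {D m : ℕ} (z : Matrix (Fin D) (Fin m) F) :
    Matrix (Fin D) (Fin m) F :=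
  Matrix.of fun i j => if (i : ℕ) = 0 then 0 else z i j

/-- `z` with both its first row and first column replaced by zeros. -/
def zeroBoth {F : Type} [Field F] {D m : ℕ} (z : Matrix (Fin D) (Fin m) F) :
    Matrix (Fin D) (Fin m) F :=
  Matrix.of fun i j => if (i : ℕ) = 0 ∨ (j : ℕ) = 0 then 0 else z i j

/-- The column span of `A` is the column span of `zeroCol A` together with the first column. -/
lemma span_cols_eq {F : Type} [Field F] {D m : ℕ} [NeZero m]
    (A : Matrix (Fin D) (Fin m) F) :
    Submodule.span F (Set.range Aᵀ) =
      Submodule.span F (Set.range (zeroCol A)ᵀ) ⊔ Submodule.span F {Aᵀ 0} := by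
  apply le_antisymm
  · rw [Submodule.span_le]
    rintro _ ⟨j, rfl⟩
    by_cases hj : (j : ℕ) = 0
    · have hj0 : j = 0 := Fin.ext (by simp [hj])
      subst hj0
      exact Submodule.mem_sup_right (Submodule.subset_span rfl)
    · have h : Aᵀ j = (zeroCol A)ᵀ j := by
        funext k; simp [zeroCol, hj, ← Fin.val_eq_zero_iff]
      rw [h]
      exact Submodule.mem_sup_left (Submodule.subset_span ⟨j, rfl⟩)
  · apply sup_le
    · rw [Submodule.span_le]
      rintro _ ⟨j, rfl⟩
      by_cases hj : (j : ℕ) = 0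
      · have h : (zeroCol A)ᵀ j = 0 := by funext k; simp [zeroCol, hj, ← Fin.val_eq_zero_iff]
        rw [h]; exact Submodule.zero_mem _
      · have h : (zeroCol A)ᵀ j = Aᵀ j := by funext k; simp [zeroCol, hj, ← Fin.val_eq_zero_iff]
        rw [h]; exact Submodule.subset_span ⟨j, rfl⟩
    · rw [Submodule.span_le, Set.singleton_subset_iff]
      exact Submodule.subset_span ⟨0, rfl⟩

lemma aux_zeroCol {F : Type} [Field F] {D m : ℕ} [NeZero D] [NeZero m]
    {i : ℕ} (hi : 1 ≤ i) (z : Matrix (Fin D) (Fin m) F)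
    (hz : z.rank = i) (hzy : (z - yMat F D m).rank = i - 1) :
    (zeroCol z).rank = i - 1 ∧
      (fun k : Fin D => if (k : ℕ) = 0 then (1 : F) else 0) ∉
        Submodule.span F (Set.range (zeroCol z)ᵀ) := by
  classical
  set e : Fin D → F := fun k => if (k : ℕ) = 0 then (1 : F) else 0 with he
  set c : Fin D → F := zᵀ 0 with hc
  set W : Submodule F (Fin D → F) := Submodule.span F (Set.range (zeroCol z)ᵀ) with hW
  have hzcol : zeroCol (z - yMat F D m) = zeroCol z := by
    funext a b
    by_cases hb : (b : ℕ) = 0 <;> simp [zeroCol, yMat, hb, ← Fin.val_eq_zero_iff]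
  have hcol0 : (z - yMat F D m)ᵀ 0 = c - e := by
    funext k
    simp [yMat, hc, he, Matrix.sub_apply]
  have hW1 : Module.finrank F ↥(W ⊔ Submodule.span F {c}) = i := by
    rw [← hz, rank_eq_finrank_span_cols, col_def, span_cols_eq]
  have hW2 : Module.finrank F ↥(W ⊔ Submodule.span F {c - e}) = i - 1 := by
    rw [← hzy, rank_eq_finrank_span_cols, col_def, span_cols_eq, hzcol, hcol0]
  have hle1 : Module.finrank F W ≤ i - 1 := by
    rw [← hW2]
    exact Submodule.finrank_mono le_sup_left
  have hsing : Module.finrank F (Submodule.span F {c}) ≤ 1 := by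
    rcases eq_or_ne c 0 with h | h
    · rw [h, Submodule.span_zero_singleton]
      simp
    · rw [finrank_span_singleton h]
  have hge1 : i ≤ Module.finrank F W + 1 := by
    calc i = Module.finrank F ↥(W ⊔ Submodule.span F {c}) := hW1.symm
    _ ≤ Module.finrank F W + Module.finrank F (Submodule.span F {c}) :=
        Submodule.finrank_add_le_finrank_add_finrank _ _
    _ ≤ Module.finrank F W + 1 := by omega
  have hkW : Module.finrank F W = i - 1 := by omega
  have hrz : (zeroCol z).rank = i - 1 := by
    rw [rank_eq_finrank_span_cols]; exact hkW
  have hcW : c ∉ W := by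
    intro hmem
    have : W ⊔ Submodule.span F {c} = W := by
      rw [sup_eq_left, Submodule.span_le, Set.singleton_subset_iff]
      exact hmem
    rw [this, hkW] at hW1
    omega
  have hceW : c - e ∈ W := by
    have hsup : W = W ⊔ Submodule.span F {c - e} := by
      apply Submodule.eq_of_le_of_finrank_le le_sup_left
      rw [hW2, hkW]
    rw [hsup]
    exact Submodule.mem_sup_right (Submodule.subset_span rfl)
  refine ⟨hrz, fun hmem => hcW ?_⟩
  have : c - e + e ∈ W := W.add_mem hceW hmem
  simpa using this

theorem stmt_6 (F : Type) [Field F] [Fintype F] (D N : ℕ)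
    (h1 : N > 2 * D) (h2 : 2 * D ≥ 6)
    (i : ℕ) (hi1 : 1 ≤ i) (hi2 : i ≤ D)
    (z : Matrix (Fin D) (Fin (N - D)) F) :
    (z.rank = i ∧ (z - yMat F D (N - D)).rank = i - 1) ↔
    (z.rank = i ∧ (z - yMat F D (N - D)).rank = i - 1 ∧
      (zeroCol z).rank = i - 1 ∧ (zeroRow z).rank = i - 1 ∧ (zeroBoth z).rank = i - 1) := by
  classical
  haveI : NeZero D := ⟨by omega⟩
  haveI : NeZero (N - D) := ⟨by omega⟩
  constructor
  · rintro ⟨hz, hzy⟩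
    obtain ⟨hcol, hemem⟩ := aux_zeroCol hi1 z hz hzy
    -- zeroRow via transpose
    have htz : zᵀ.rank = i := by rw [rank_transpose]; exact hz
    have htsub : zᵀ - yMat F (N - D) D = (z - yMat F D (N - D))ᵀ := by
      funext a b
      simp [yMat, Matrix.sub_apply, and_comm]
    have htzy : (zᵀ - yMat F (N - D) D).rank = i - 1 := by
      rw [htsub, rank_transpose]; exact hzy
    obtain ⟨hrowT, _⟩ := aux_zeroCol hi1 zᵀ htz htzy
    have hrowEq : (zeroRow z)ᵀ = zeroCol zᵀ := by
      funext a b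
      simp [zeroRow, zeroCol]
    have hrow : (zeroRow z).rank = i - 1 := by
      rw [← rank_transpose, hrowEq]; exact hrowT
    -- zeroBoth
    set P : (Fin D → F) →ₗ[F] (Fin D → F) :=
      { toFun := fun v k => if (k : ℕ) = 0 then 0 else v k
        map_add' := fun u v => by funext k; by_cases h : (k : ℕ) = 0 <;> simp [h, ← Fin.val_eq_zero_iff]
        map_smul' := fun a v => by funext k; by_cases h : (k : ℕ) = 0 <;> simp [h, ← Fin.val_eq_zero_iff] } with hP
    set W : Submodule F (Fin D → F) := Submodule.span F (Set.range (zeroCol z)ᵀ) with hW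
    have hbothT : (zeroBoth z)ᵀ = fun j => P ((zeroCol z)ᵀ j) := by
      funext j k
      by_cases hk : (k : ℕ) = 0 <;> by_cases hj : (j : ℕ) = 0 <;>
        simp [zeroBoth, zeroCol, hP, hk, hj, ← Fin.val_eq_zero_iff]
    have hrange : Set.range (zeroBoth z)ᵀ = P '' Set.range (zeroCol z)ᵀ := by
      rw [hbothT]; exact Set.range_comp' P (zeroCol z)ᵀ
    have hspan : Submodule.span F (Set.range (zeroBoth z)ᵀ) = W.map P := by
      rw [hrange, Submodule.span_image]
    have hinj : Function.Injective (P.comp W.subtype) := by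
      rw [← LinearMap.ker_eq_bot, LinearMap.ker_eq_bot']
      rintro ⟨v, hv⟩ h0
      have h0' : P v = 0 := h0
      have hvk : ∀ k : Fin D, (k : ℕ) ≠ 0 → v k = 0 := by
        intro k hk
        have := congrFun h0' k
        simpa [hP, hk, ← Fin.val_eq_zero_iff] using this
      have hve : v = v 0 • (fun k : Fin D => if (k : ℕ) = 0 then (1 : F) else 0) := by
        funext k
        by_cases hk : (k : ℕ) = 0
        · have hk0 : k = 0 := Fin.ext (by simp [hk])
          subst hk0; simp [hk]
        · simp [hk, hvk k hk, ← Fin.val_eq_zero_iff]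
      suffices hv0 : v = 0 by exact Subtype.ext hv0
      by_cases h : v 0 = 0
      · rw [hve, h, zero_smul]
      · exfalso
        apply hemem
        have hmem : (v 0)⁻¹ • v ∈ W := W.smul_mem _ hv
        have heq : (fun k : Fin D => if (k : ℕ) = 0 then (1 : F) else 0) = (v 0)⁻¹ • v := by
          funext k
          by_cases hk : (k : ℕ) = 0
          · have hk0 : k = 0 := Fin.ext (by simp [hk])
            subst hk0
            simp [Pi.smul_apply, smul_eq_mul, inv_mul_cancel₀ h]
          · simp [hk, hvk k hk, ← Fin.val_eq_zero_iff]
        rw [heq]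
        exact hmem
    have hkW : Module.finrank F W = i - 1 := by
      rw [← hcol, rank_eq_finrank_span_cols, col_def]
    have hmap : W.map P = LinearMap.range (P.comp W.subtype) := by
      rw [LinearMap.range_comp, Submodule.range_subtype]
    have hboth : (zeroBoth z).rank = i - 1 := by
      rw [rank_eq_finrank_span_cols, col_def, hspan, hmap, LinearMap.finrank_range_of_inj hinj, hkW]
    exact ⟨hz, hzy, hcol, hrow, hboth⟩
  · rintro ⟨hz, hzy, _⟩
    exact ⟨hz, hzy⟩

end
end

section
/- Let y be the D×(N−D) matrix over GF(q) with (1,1)-entry 1 and zeros elsewhere, and let z be a matrix with rank(z) = rank(z−y) = i. Then rank(⌜z) ∈ {i−2, i−1}, rank(|z) ∈ {i−1, i}, and rank(z̄) ∈ {i−1, i}, where |z, z̄, ⌜z denote z with first column, first row, and both zeroed respectively. Moreover the possible combinations (rank(|z), rank(z̄), rank(⌜z)) are exactly (i−1, i−1, i−2), (i−1, i−1, i−1), (i, i−1, i−1), and (i−1, i, i−1). -/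
noncomputable section

open Matrix

namespace Stmt8Aux

variable {F : Type} [Field F] {D m : ℕ}

/-- column space -/
def colSp (A : Matrix (Fin D) (Fin m) F) : Submodule F (Fin D → F) :=
  Submodule.span F (Set.range Aᵀ)

lemma rank_eq_colSp (A : Matrix (Fin D) (Fin m) F) :
    A.rank = Module.finrank F (colSp A) :=
  Matrix.rank_eq_finrank_span_cols A

lemma col_zeroCol (A : Matrix (Fin D) (Fin m) F) (j : Fin m) :
    (zeroCol A)ᵀ j = if (j : ℕ) = 0 then 0 else Aᵀ j := by
  funext k
  by_cases hj : (j : ℕ) = 0 <;> simp [zeroCol, transpose, hj]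

lemma colSp_zeroCol_le (A : Matrix (Fin D) (Fin m) F) :
    colSp (zeroCol A) ≤ colSp A := by
  rw [colSp, Submodule.span_le]
  rintro _ ⟨j, rfl⟩
  rw [col_zeroCol]
  by_cases hj : (j : ℕ) = 0
  · simp [hj]
  · simp only [hj, if_false]
    exact Submodule.subset_span ⟨j, rfl⟩

lemma rank_zeroCol_le (A : Matrix (Fin D) (Fin m) F) :
    (zeroCol A).rank ≤ A.rank := by
  rw [rank_eq_colSp, rank_eq_colSp]
  exact Submodule.finrank_mono (colSp_zeroCol_le A)

lemma colSp_le_sup [NeZero m] (A : Matrix (Fin D) (Fin m) F) :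
    colSp A ≤ colSp (zeroCol A) ⊔ Submodule.span F {Aᵀ 0} := by
  rw [colSp, Submodule.span_le]
  rintro _ ⟨j, rfl⟩
  by_cases hj : (j : ℕ) = 0
  · have : j = 0 := by
      ext; simpa using hj
    subst this
    exact Submodule.mem_sup_right (Submodule.mem_span_singleton_self _)
  · apply Submodule.mem_sup_left
    have : Aᵀ j = (zeroCol A)ᵀ j := by rw [col_zeroCol, if_neg hj]
    rw [this]
    exact Submodule.subset_span ⟨j, rfl⟩

lemma rank_le_rank_zeroCol_add_one [NeZero m] (A : Matrix (Fin D) (Fin m) F) :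
    A.rank ≤ (zeroCol A).rank + 1 := by
  rw [rank_eq_colSp, rank_eq_colSp]
  have h1 := Submodule.finrank_mono (colSp_le_sup A)
  have h2 := Submodule.finrank_sup_add_finrank_inf_eq (colSp (zeroCol A))
    (Submodule.span F {Aᵀ 0})
  have h3 : Module.finrank F (Submodule.span F {Aᵀ 0}) ≤ 1 := by
    by_cases h : Aᵀ 0 = 0
    · rw [h, Submodule.span_zero_singleton, finrank_bot]
      exact Nat.zero_le 1
    · rw [finrank_span_singleton h]
  omega

lemma zeroRow_eq (A : Matrix (Fin D) (Fin m) F) : zeroRow A = (zeroCol Aᵀ)ᵀ := by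
  ext k j; simp [zeroRow, zeroCol, transpose]

lemma zeroBoth_eq_row_col (A : Matrix (Fin D) (Fin m) F) :
    zeroBoth A = zeroRow (zeroCol A) := by
  ext k j
  by_cases hk : (k : ℕ) = 0 <;> by_cases hj : (j : ℕ) = 0 <;>
    simp [zeroBoth, zeroRow, zeroCol, hk, hj]

lemma zeroBoth_eq_col_row (A : Matrix (Fin D) (Fin m) F) :
    zeroBoth A = zeroCol (zeroRow A) := by
  ext k j
  by_cases hk : (k : ℕ) = 0 <;> by_cases hj : (j : ℕ) = 0 <;>
    simp [zeroBoth, zeroRow, zeroCol, hk, hj]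

lemma rank_zeroRow_le [Fintype F] (A : Matrix (Fin D) (Fin m) F) :
    (zeroRow A).rank ≤ A.rank := by
  rw [zeroRow_eq, Matrix.rank_transpose, ← Matrix.rank_transpose A]
  exact rank_zeroCol_le Aᵀ

lemma rank_le_rank_zeroRow_add_one [Fintype F] [NeZero D] (A : Matrix (Fin D) (Fin m) F) :
    A.rank ≤ (zeroRow A).rank + 1 := by
  rw [zeroRow_eq, Matrix.rank_transpose, ← Matrix.rank_transpose A]
  exact rank_le_rank_zeroCol_add_one Aᵀ

/-- If zeroing the first column doesn't drop the rank, the column spaces agree. -/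
lemma colSp_eq_of_rank_eq {A : Matrix (Fin D) (Fin m) F}
    (h : (zeroCol A).rank = A.rank) : colSp (zeroCol A) = colSp A := by
  apply Submodule.eq_of_le_of_finrank_le (colSp_zeroCol_le A)
  rw [← rank_eq_colSp, ← rank_eq_colSp, h]

/-- If zeroing the first row doesn't drop the rank, then `e₀ ∉ colSp A`. -/
lemma e0_not_mem [Fintype F] [NeZero D] {A : Matrix (Fin D) (Fin m) F}
    (h : (zeroRow A).rank = A.rank) :
    (fun k : Fin D => if (k : ℕ) = 0 then (1 : F) else 0) ∉ colSp A := by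
  have h' : (zeroCol Aᵀ).rank = Aᵀ.rank := by
    rw [Matrix.rank_transpose, ← h, zeroRow_eq, Matrix.rank_transpose]
  have hEq := colSp_eq_of_rank_eq h'
  have hmem : Aᵀᵀ 0 ∈ colSp (zeroCol Aᵀ) := by
    rw [hEq]
    exact Submodule.subset_span ⟨0, rfl⟩
  rw [colSp] at hmem
  obtain ⟨c, hc⟩ := (Submodule.mem_span_range_iff_exists_fun F).mp hmem
  set c' : Fin D → F := fun k => if (k : ℕ) = 0 then 0 else c k with hc'
  have hrow : ∀ j, A 0 j = ∑ k, c' k * A k j := by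
    intro j
    have h1 := congrFun hc j
    simp only [Finset.sum_apply, Pi.smul_apply, smul_eq_mul, transpose_apply] at h1
    rw [← h1]
    apply Finset.sum_congr rfl
    intro k _
    by_cases hk : (k : ℕ) = 0 <;> simp [hc', zeroCol, hk]
  let φ : (Fin D → F) →ₗ[F] F :=
    { toFun := fun w => w 0 - ∑ k, c' k * w k
      map_add' := by
        intro u v
        simp only [Pi.add_apply, mul_add, Finset.sum_add_distrib]
        ring
      map_smul' := by
        intro t u
        simp only [Pi.smul_apply, smul_eq_mul, RingHom.id_apply, Finset.mul_sum, mul_sub]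
        congr 1
        exact Finset.sum_congr rfl fun k _ => by ring }
  have hker : colSp A ≤ LinearMap.ker φ := by
    rw [colSp, Submodule.span_le]
    rintro _ ⟨j, rfl⟩
    simp only [SetLike.mem_coe, LinearMap.mem_ker]
    show Aᵀ j 0 - ∑ k, c' k * Aᵀ j k = 0
    simp only [transpose_apply]
    rw [← hrow j, sub_self]
  intro h0
  have := hker h0
  rw [LinearMap.mem_ker] at this
  have hval : φ (fun k : Fin D => if (k : ℕ) = 0 then (1 : F) else 0) = 1 := by
    show (if ((0 : Fin D) : ℕ) = 0 then (1:F) else 0) - ∑ k, c' k * (if (k : ℕ) = 0 then (1:F) else 0) = 1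
    have hz : ∀ k : Fin D, c' k * (if (k : ℕ) = 0 then (1:F) else 0) = 0 := by
      intro k
      by_cases hk : (k : ℕ) = 0 <;> simp only [Fin.val_eq_zero_iff] at hk <;> simp [hc', hk]
    rw [Finset.sum_congr rfl (fun k _ => hz k)]
    simp
  rw [this] at hval
  exact one_ne_zero hval.symm

lemma not_both [Fintype F] [NeZero D] [NeZero m] {z : Matrix (Fin D) (Fin m) F}
    (hzy : (z - yMat F D m).rank = z.rank)
    (ha : (zeroCol z).rank = z.rank) (hb : (zeroRow z).rank = z.rank) : False := by
  have he := e0_not_mem hb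
  have hcolEq := colSp_eq_of_rank_eq ha
  have hzc : zeroCol (z - yMat F D m) = zeroCol z := by
    ext k j
    by_cases hj : (j : ℕ) = 0 <;> simp only [Fin.val_eq_zero_iff] at hj <;> simp [zeroCol, yMat, hj, Matrix.sub_apply]
  have hle : colSp z ≤ colSp (z - yMat F D m) := by
    rw [colSp, Submodule.span_le]
    rintro _ ⟨j, rfl⟩
    by_cases hj : (j : ℕ) = 0
    · have hj0 : j = 0 := by ext; simpa using hj
      subst hj0
      have hh : zᵀ 0 ∈ colSp (zeroCol z) := by
        rw [hcolEq]; exact Submodule.subset_span ⟨0, rfl⟩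
      rw [← hzc] at hh
      exact colSp_zeroCol_le _ hh
    · have hcols : zᵀ j = (z - yMat F D m)ᵀ j := by
        funext k
        simp [yMat, hj, Matrix.sub_apply, transpose_apply, Fin.val_eq_zero_iff.not.mp hj]
      rw [hcols]
      exact Submodule.subset_span ⟨j, rfl⟩
  have he0mem : (fun k : Fin D => if (k : ℕ) = 0 then (1 : F) else 0)
      ∈ colSp (z - yMat F D m) := by
    have h1 : zᵀ 0 ∈ colSp (z - yMat F D m) := hle (Submodule.subset_span ⟨0, rfl⟩)
    have h2 : (z - yMat F D m)ᵀ 0 ∈ colSp (z - yMat F D m) := Submodule.subset_span ⟨0, rfl⟩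
    have h3 := Submodule.sub_mem _ h1 h2
    have h4 : zᵀ 0 - (z - yMat F D m)ᵀ 0
        = fun k : Fin D => if (k : ℕ) = 0 then (1 : F) else 0 := by
      funext k
      by_cases hk : (k : ℕ) = 0 <;> simp only [Fin.val_eq_zero_iff] at hk <;> simp [yMat, Matrix.sub_apply, transpose_apply, hk]
    rwa [h4] at h3
  have hlt : colSp z < colSp (z - yMat F D m) := by
    refine lt_of_le_of_ne hle fun heq => he ?_
    rw [heq]; exact he0mem
  have hfin := Submodule.finrank_lt_finrank_of_lt hlt
  rw [← rank_eq_colSp, ← rank_eq_colSp, hzy] at hfin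
  exact lt_irrefl _ hfin

end Stmt8Aux

theorem stmt_8 (F : Type) [Field F] [Fintype F] (D N : ℕ)
    (hq : Fintype.card F ≠ 2) (h1 : N > 2 * D) (h2 : 2 * D ≥ 6)
    (i : ℕ) (hi1 : 1 ≤ i) (hi2 : i ≤ D)
    (z : Matrix (Fin D) (Fin (N - D)) F)
    (hz : z.rank = i) (hzy : (z - yMat F D (N - D)).rank = i) :
    ((zeroBoth z).rank = i - 2 ∨ (zeroBoth z).rank = i - 1) ∧
    ((zeroCol z).rank = i - 1 ∨ (zeroCol z).rank = i) ∧
    ((zeroRow z).rank = i - 1 ∨ (zeroRow z).rank = i) ∧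
    (((zeroCol z).rank, (zeroRow z).rank, (zeroBoth z).rank) = (i - 1, i - 1, i - 2) ∨
     ((zeroCol z).rank, (zeroRow z).rank, (zeroBoth z).rank) = (i - 1, i - 1, i - 1) ∨
     ((zeroCol z).rank, (zeroRow z).rank, (zeroBoth z).rank) = (i, i - 1, i - 1) ∨
     ((zeroCol z).rank, (zeroRow z).rank, (zeroBoth z).rank) = (i - 1, i, i - 1)) := by
  haveI : NeZero D := ⟨by omega⟩
  haveI : NeZero (N - D) := ⟨by omega⟩
  open Stmt8Aux in
  have ha1 : (zeroCol z).rank ≤ i := hz ▸ rank_zeroCol_le z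
  have ha2 : i ≤ (zeroCol z).rank + 1 := hz ▸ rank_le_rank_zeroCol_add_one z
  have hb1 : (zeroRow z).rank ≤ i := hz ▸ Stmt8Aux.rank_zeroRow_le z
  have hb2 : i ≤ (zeroRow z).rank + 1 := hz ▸ Stmt8Aux.rank_le_rank_zeroRow_add_one z
  have hc1 : (zeroBoth z).rank ≤ (zeroRow z).rank := by
    rw [Stmt8Aux.zeroBoth_eq_col_row]; exact Stmt8Aux.rank_zeroCol_le _
  have hc2 : (zeroRow z).rank ≤ (zeroBoth z).rank + 1 := by
    rw [Stmt8Aux.zeroBoth_eq_col_row]; exact Stmt8Aux.rank_le_rank_zeroCol_add_one _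
  have hc3 : (zeroBoth z).rank ≤ (zeroCol z).rank := by
    rw [Stmt8Aux.zeroBoth_eq_row_col]; exact Stmt8Aux.rank_zeroRow_le _
  have hc4 : (zeroCol z).rank ≤ (zeroBoth z).rank + 1 := by
    rw [Stmt8Aux.zeroBoth_eq_row_col]; exact Stmt8Aux.rank_le_rank_zeroRow_add_one _
  have hnb : ¬((zeroCol z).rank = i ∧ (zeroRow z).rank = i) := by
    rintro ⟨ha, hb⟩
    exact Stmt8Aux.not_both (by rw [hzy, hz]) (by rw [ha, hz]) (by rw [hb, hz])
  refine ⟨by omega, by omega, by omega, ?_⟩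
  simp only [Prod.mk.injEq]
  omega

end
end

section
/- Let y be the D×(N−D) matrix over GF(q) with (1,1)-entry 1 and zeros elsewhere. If z is a matrix with rank(z) = rank(z−y) = i, rank(|z) = i, rank(z̄) = i−1, rank(⌜z) = i−1, then: the number of common neighbors w of the zero matrix and y (i.e., rank(w) = rank(w−y) = 1) with rank(z−w) = i−1 equals q^{i−1}, and the number of such w with rank(z−w) = i+1 equals q^D − q^i. -/
noncomputable section

open Matrix Submodule Module

set_option linter.unusedSectionVars false



variable {K : Type} [Field K]

section VSpace
variable {V : Type*} [AddCommGroup V] [Module K V] [FiniteDimensional K V]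

lemma span_sup_of_mem {v : V} {R : Submodule K V} (h : v ∈ R) :
    Submodule.span K {v} ⊔ R = R :=
  sup_eq_right.mpr ((Submodule.span_singleton_le_iff_mem v R).mpr h)

lemma finrank_span_sup_of_not_mem {v : V} {R : Submodule K V} (h : v ∉ R) :
    finrank K ↥(Submodule.span K {v} ⊔ R) = finrank K ↥R + 1 := by
  have hv : v ≠ 0 := fun hv => h (hv ▸ R.zero_mem)
  have hinf : Submodule.span K {v} ⊓ R = ⊥ := by
    rw [eq_bot_iff]
    rintro x ⟨hx1, hx2⟩
    obtain ⟨c, rfl⟩ := Submodule.mem_span_singleton.mp hx1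
    rcases eq_or_ne c 0 with rfl | hc
    · simp
    · exact absurd ((R.smul_mem_iff hc).mp hx2) h
  have := Submodule.finrank_sup_add_finrank_inf_eq (Submodule.span K {v}) R
  rw [hinf, finrank_bot, finrank_span_singleton hv] at this
  omega

/-- dichotomy for finrank of (span v ⊔ R) -/
lemma finrank_span_sup_cases (v : V) (R : Submodule K V) :
    (v ∈ R ∧ finrank K ↥(Submodule.span K {v} ⊔ R) = finrank K ↥R) ∨
    (v ∉ R ∧ finrank K ↥(Submodule.span K {v} ⊔ R) = finrank K ↥R + 1) := by
  by_cases h : v ∈ R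
  · exact Or.inl ⟨h, by rw [span_sup_of_mem h]⟩
  · exact Or.inr ⟨h, finrank_span_sup_of_not_mem h⟩

lemma span_range_fin {n : ℕ} [NeZero n] (f : Fin n → V) :
    Submodule.span K (Set.range f)
      = Submodule.span K {f 0} ⊔ Submodule.span K (f '' {l | l ≠ 0}) := by
  rw [← Submodule.span_union]
  congr 1
  ext x
  constructor
  · rintro ⟨l, rfl⟩
    rcases eq_or_ne l 0 with rfl | hl
    · exact Or.inl rfl
    · exact Or.inr ⟨l, hl, rfl⟩
  · rintro (h | ⟨l, hl, rfl⟩)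
    · exact ⟨0, h.symm⟩
    · exact ⟨l, rfl⟩

end VSpace

section Rank
variable {D m : ℕ} [NeZero D] [NeZero m]

lemma rank_eq_rows (A : Matrix (Fin D) (Fin m) K) :
    A.rank = finrank K ↥(Submodule.span K {A 0} ⊔ Submodule.span K (A '' {k | k ≠ 0})) := by
  rw [Matrix.rank_eq_finrank_span_row, span_range_fin]
  rfl

lemma rank_eq_cols (A : Matrix (Fin D) (Fin m) K) :
    A.rank = finrank K ↥(Submodule.span K {Aᵀ 0} ⊔ Submodule.span K (Aᵀ '' {l | l ≠ 0})) := by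
  rw [Matrix.rank_eq_finrank_span_cols, span_range_fin]
  rfl

end Rank




/-- standard first basis vector -/
def eOne (K : Type) [Field K] (n : ℕ) : Fin n → K := fun k => if (k : ℕ) = 0 then 1 else 0

lemma eOne_zero (n : ℕ) [NeZero n] : eOne K n 0 = 1 := by simp [eOne]

lemma fin_val_ne (n : ℕ) [NeZero n] (k : Fin n) : (k:ℕ) ≠ 0 ↔ k ≠ 0 := by
  constructor
  · intro h hk; exact h (by simp [hk])
  · intro h hk; exact h (Fin.ext (by simpa using hk))

lemma eOne_ne (n : ℕ) [NeZero n] {k : Fin n} (h : k ≠ 0) : eOne K n k = 0 := by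
  simp [eOne, (fin_val_ne n k).mpr h]

lemma eOne_ne_zero (n : ℕ) [NeZero n] : eOne K n ≠ 0 := by
  intro h
  have := congrFun h 0
  rw [eOne_zero] at this
  simp at this

section VMV
variable {D m : ℕ} [NeZero D] [NeZero m]

lemma vecMulVec_row (a : Fin D → K) (b : Fin m → K) (k : Fin D) :
    vecMulVec a b k = a k • b := by
  ext j; simp [vecMulVec_apply, Pi.smul_apply, smul_eq_mul]

lemma vecMulVec_col (a : Fin D → K) (b : Fin m → K) (l : Fin m) :
    (vecMulVec a b)ᵀ l = b l • a := by
  ext j; simp [vecMulVec_apply, Pi.smul_apply, smul_eq_mul, mul_comm]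

lemma span_cols_vecMulVec {a : Fin D → K} {b : Fin m → K} (hb : b ≠ 0) :
    Submodule.span K (Set.range (vecMulVec a b)ᵀ) = Submodule.span K {a} := by
  apply le_antisymm
  · rw [Submodule.span_le]
    rintro x ⟨l, rfl⟩
    rw [vecMulVec_col]
    exact Submodule.smul_mem _ _ (Submodule.mem_span_singleton_self a)
  · rw [Submodule.span_le, Set.singleton_subset_iff]
    obtain ⟨l, hl⟩ : ∃ l, b l ≠ 0 := by
      by_contra h
      push_neg at h
      exact hb (funext h)
    have hmem : (vecMulVec a b)ᵀ l ∈ Submodule.span K (Set.range (vecMulVec a b)ᵀ) :=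
      Submodule.subset_span ⟨l, rfl⟩
    have h2 := Submodule.smul_mem (Submodule.span K (Set.range (vecMulVec a b)ᵀ)) ((b l)⁻¹) hmem
    rwa [vecMulVec_col, smul_smul, inv_mul_cancel₀ hl, one_smul] at h2

lemma rank_vecMulVec_one {a : Fin D → K} {b : Fin m → K} (ha : a ≠ 0) (hb : b ≠ 0) :
    (vecMulVec a b).rank = 1 := by
  rw [Matrix.rank_eq_finrank_span_cols]
  change finrank K ↥(Submodule.span K (Set.range (vecMulVec a b)ᵀ)) = 1
  rw [span_cols_vecMulVec hb, finrank_span_singleton ha]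

lemma vecMulVec_sub_right (a : Fin D → K) (b b' : Fin m → K) :
    vecMulVec a b - vecMulVec a b' = vecMulVec a (b - b') := by
  ext k j; simp [vecMulVec_apply, mul_sub]

lemma vecMulVec_sub_left (a a' : Fin D → K) (b : Fin m → K) :
    vecMulVec a b - vecMulVec a' b = vecMulVec (a - a') b := by
  ext k j; simp [vecMulVec_apply, sub_mul]

/-- Any rank-one matrix is an outer product. -/
lemma exists_vecMulVec_of_rank_one {w : Matrix (Fin D) (Fin m) K} (hw : w.rank = 1) :
    ∃ a b, a ≠ 0 ∧ w = vecMulVec a b := by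
  rw [Matrix.rank_eq_finrank_span_cols] at hw
  change finrank K ↥(Submodule.span K (Set.range wᵀ)) = 1 at hw
  set W := Submodule.span K (Set.range wᵀ) with hW
  have hWne : W ≠ ⊥ := by
    intro h
    rw [h, finrank_bot] at hw
    exact one_ne_zero hw.symm
  obtain ⟨a, haW, ha⟩ := Submodule.exists_mem_ne_zero_of_ne_bot hWne
  have hspan : Submodule.span K {a} = W := by
    apply Submodule.eq_of_le_of_finrank_le
    · rwa [Submodule.span_singleton_le_iff_mem]
    · rw [hw, finrank_span_singleton ha]
  have hcol : ∀ l, ∃ c : K, c • a = wᵀ l := by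
    intro l
    have : wᵀ l ∈ W := Submodule.subset_span ⟨l, rfl⟩
    rw [← hspan] at this
    exact Submodule.mem_span_singleton.mp this
  choose b hbspec using hcol
  refine ⟨a, b, ha, ?_⟩
  ext k j
  have := congrFun (hbspec j) k
  simp only [Pi.smul_apply, smul_eq_mul, transpose_apply] at this
  rw [vecMulVec_apply, ← this, mul_comm]
end VMV




lemma classify {D m : ℕ} [NeZero D] [NeZero m] (w : Matrix (Fin D) (Fin m) K)
    (hw : w.rank = 1) (hwy : (w - vecMulVec (eOne K D) (eOne K m)).rank = 1) :
    (∃ c, c ≠ 0 ∧ w = vecMulVec (eOne K D) c) ∨ (∃ d, d ≠ 0 ∧ w = vecMulVec d (eOne K m)) := by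
  obtain ⟨a, b, ha, rfl⟩ := exists_vecMulVec_of_rank_one hw
  have hb : b ≠ 0 := by
    rintro rfl
    rw [show vecMulVec a (0 : Fin m → K) = 0 by ext k j; simp [vecMulVec_apply],
      Matrix.rank_zero] at hw
    exact one_ne_zero hw.symm
  by_cases hbs : ∀ l : Fin m, l ≠ 0 → b l = 0
  · -- w = (b 0 • a) ⬝ f1ᵀ
    right
    have hb0 : b 0 ≠ 0 := by
      intro h0
      apply hb
      funext l
      rcases eq_or_ne l 0 with rfl | hl
      · exact h0
      · exact hbs l hl
    refine ⟨b 0 • a, smul_ne_zero hb0 ha, ?_⟩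
    ext k j
    rcases eq_or_ne j 0 with rfl | hj
    · simp [vecMulVec_apply, eOne_zero, mul_comm]
    · rw [vecMulVec_apply, vecMulVec_apply, hbs j hj, eOne_ne m hj, mul_zero, mul_zero]
  · left
    push_neg at hbs
    obtain ⟨l, hl, hbl⟩ := hbs
    -- column argument
    set M := vecMulVec a b - vecMulVec (eOne K D) (eOne K m) with hM
    have hcol : ∀ j, Mᵀ j = b j • a - eOne K m j • eOne K D := by
      intro j
      ext k
      simp [hM, vecMulVec_apply, Matrix.sub_apply, mul_comm]
    rw [Matrix.rank_eq_finrank_span_cols] at hwy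
    change finrank K ↥(Submodule.span K (Set.range Mᵀ)) = 1 at hwy
    set W := Submodule.span K (Set.range Mᵀ) with hW
    have hMl : Mᵀ l = b l • a := by rw [hcol, eOne_ne m hl, zero_smul, sub_zero]
    have hmemla : b l • a ∈ W := hMl ▸ Submodule.subset_span ⟨l, rfl⟩
    have hbla : b l • a ≠ 0 := smul_ne_zero hbl ha
    have hspan : Submodule.span K {b l • a} = W := by
      apply Submodule.eq_of_le_of_finrank_le
      · rwa [Submodule.span_singleton_le_iff_mem]
      · rw [hwy, finrank_span_singleton hbla]
    have hmem0 : Mᵀ 0 ∈ Submodule.span K {a} := by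
      rw [← Submodule.span_singleton_smul_eq (IsUnit.mk0 _ hbl) a, hspan]
      exact Submodule.subset_span ⟨0, rfl⟩
    rw [hcol 0, eOne_zero] at hmem0
    obtain ⟨t, ht⟩ := Submodule.mem_span_singleton.mp hmem0
    rw [one_smul] at ht
    have he1 : eOne K D = (b 0 - t) • a := by
      rw [sub_smul, ht]
      abel
    have hs : b 0 - t ≠ 0 := by
      intro h
      rw [h, zero_smul] at he1
      exact eOne_ne_zero D he1
    have haa : a = (b 0 - t)⁻¹ • eOne K D := by
      rw [he1, smul_smul, inv_mul_cancel₀ hs, one_smul]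
    refine ⟨(b 0 - t)⁻¹ • b, smul_ne_zero (inv_ne_zero hs) hb, ?_⟩
    ext k j
    rw [vecMulVec_apply, vecMulVec_apply, haa]
    simp only [Pi.smul_apply, smul_eq_mul]
    ring




lemma main_count {F : Type} [Field F] [Fintype F] {D m : ℕ} [NeZero D] [NeZero m]
    {i : ℕ} (hi1 : 1 ≤ i) (hi2 : i ≤ D)
    (z : Matrix (Fin D) (Fin m) F)
    (hz : z.rank = i) (hzy : (z - yMat F D m).rank = i)
    (hc : (zeroCol z).rank = i) (hr : (zeroRow z).rank = i - 1) :
    {w : Matrix (Fin D) (Fin m) F |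
        w.rank = 1 ∧ (w - yMat F D m).rank = 1 ∧ (z - w).rank = i - 1}.ncard
      = Fintype.card F ^ (i - 1) ∧
    {w : Matrix (Fin D) (Fin m) F |
        w.rank = 1 ∧ (w - yMat F D m).rank = 1 ∧ (z - w).rank = i + 1}.ncard
      = Fintype.card F ^ D - Fintype.card F ^ i := by
  classical
  have hy : yMat F D m = vecMulVec (eOne F D) (eOne F m) := by
    ext k j
    by_cases h1 : (k : ℕ) = 0 <;> by_cases h2 : (j : ℕ) = 0 <;>
      simp_all [yMat, vecMulVec_apply, eOne]
  set R : Submodule F (Fin m → F) := Submodule.span F (z '' {k | k ≠ 0}) with hRdef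
  set C : Submodule F (Fin D → F) := Submodule.span F (zᵀ '' {l | l ≠ 0}) with hCdef
  -- finrank of R
  have hRrank : finrank F ↥R = i - 1 := by
    rw [rank_eq_rows] at hr
    have h1 : zeroRow z 0 = 0 := by
      ext j; simp [zeroRow]
    have h2 : (zeroRow z) '' {k | k ≠ 0} = z '' {k | k ≠ 0} := by
      apply Set.image_congr
      intro k hk
      ext j
      simp [zeroRow, (fin_val_ne D k).mpr hk, show k ≠ 0 from hk]
    rw [h1, h2, Submodule.span_zero_singleton, bot_sup_eq] at hr
    exact hr
  -- finrank of C
  have hCrank : finrank F ↥C = i := by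
    rw [rank_eq_cols] at hc
    have h1 : (zeroCol z)ᵀ 0 = 0 := by
      ext k; simp [zeroCol]
    have h2 : (zeroCol z)ᵀ '' {l | l ≠ 0} = zᵀ '' {l | l ≠ 0} := by
      apply Set.image_congr
      intro l hl
      ext k
      simp [zeroCol, (fin_val_ne m l).mpr hl, show l ≠ 0 from hl]
    rw [h1, h2, Submodule.span_zero_singleton, bot_sup_eq] at hc
    exact hc
  -- first row not in R
  have hzrows : finrank F ↥(Submodule.span F {z 0} ⊔ R) = i := by
    rw [rank_eq_rows] at hz; exact hz
  have hrow0 : z 0 ∉ R := by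
    intro h
    rw [span_sup_of_mem h, hRrank] at hzrows
    omega
  -- first column in C
  have hcol0 : zᵀ 0 ∈ C := by
    rw [rank_eq_cols] at hz
    rcases finrank_span_sup_cases (zᵀ 0) C with ⟨h, _⟩ | ⟨h, heq⟩
    · exact h
    · rw [heq, hCrank] at hz; omega
  -- z 0 - f1 not in R
  have hf1 : z 0 - eOne F m ∉ R := by
    have h0 : (z - yMat F D m) 0 = z 0 - eOne F m := by
      ext j
      simp [yMat, Matrix.sub_apply, eOne]
    have h2 : (z - yMat F D m) '' {k | k ≠ 0} = z '' {k | k ≠ 0} := by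
      apply Set.image_congr
      intro k hk
      ext j
      simp [yMat, Matrix.sub_apply, (fin_val_ne D k).mpr hk, show k ≠ 0 from hk]
    rw [rank_eq_rows, h0, h2] at hzy
    intro h
    rw [span_sup_of_mem h, hRrank] at hzy
    omega
  -- e1 ∈ C
  have he1C : eOne F D ∈ C := by
    set π : (Fin D → F) →ₗ[F] (Fin D → F) :=
      { toFun := fun v => fun k => if (k : ℕ) = 0 then 0 else v k
        map_add' := by intro u v; ext k; by_cases h : (k:ℕ) = 0 <;> simp_all
        map_smul' := by intro c v; ext k; by_cases h : (k:ℕ) = 0 <;> simp_all } with hπdef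
    have hπ : (zeroRow z).col = π ∘ z.col := by
      funext l; ext k; rfl
    have hS : Submodule.span F (Set.range z.col) = C := by
      rw [span_range_fin]; exact span_sup_of_mem hcol0
    have hmap : finrank F ↥(Submodule.map π C) = i - 1 := by
      rw [Matrix.rank_eq_finrank_span_cols] at hr
      rw [hπ, Set.range_comp, Submodule.span_image, hS] at hr
      exact hr
    have hrn := LinearMap.finrank_range_add_finrank_ker (π.domRestrict C)
    rw [LinearMap.range_domRestrict] at hrn
    rw [hmap, hCrank] at hrn
    have hker : finrank F ↥(LinearMap.ker (π.domRestrict C)) = 1 := by omega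
    have hkerne : LinearMap.ker (π.domRestrict C) ≠ ⊥ := by
      intro h
      rw [h, finrank_bot] at hker
      omega
    obtain ⟨v, hvker, hvne⟩ := Submodule.exists_mem_ne_zero_of_ne_bot hkerne
    have hπv : π (v : Fin D → F) = 0 := hvker
    have hvk : ∀ k : Fin D, (k : ℕ) ≠ 0 → (v : Fin D → F) k = 0 := by
      intro k hk
      have := congrFun hπv k
      simpa [hπdef, hk, (fin_val_ne D k).mp hk] using this
    have hv0 : (v : Fin D → F) 0 ≠ 0 := by
      intro h0
      apply hvne
      have : (v : Fin D → F) = 0 := by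
        funext k
        by_cases hk : (k : ℕ) = 0
        · rwa [show k = 0 from Fin.ext (by simpa using hk)]
        · exact hvk k hk
      exact Subtype.ext this
    have : eOne F D = ((v : Fin D → F) 0)⁻¹ • (v : Fin D → F) := by
      funext k
      by_cases hk : (k : ℕ) = 0
      · rw [show k = 0 from Fin.ext (by simpa using hk)]
        simp [eOne, inv_mul_cancel₀ hv0]
      · simp [eOne, hk, hvk k hk]
    rw [this]
    exact Submodule.smul_mem _ _ v.2
  -- rank formulas for modified matrices
  have hzw1 : ∀ c : Fin m → F, (z - vecMulVec (eOne F D) c).rank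
      = finrank F ↥(Submodule.span F {z 0 - c} ⊔ R) := by
    intro c
    rw [rank_eq_rows]
    have h0 : (z - vecMulVec (eOne F D) c) 0 = z 0 - c := by
      ext j; simp [Matrix.sub_apply, vecMulVec_apply, eOne_zero]
    have h2 : (z - vecMulVec (eOne F D) c) '' {k | k ≠ 0} = z '' {k | k ≠ 0} := by
      apply Set.image_congr
      intro k hk
      ext j
      simp [Matrix.sub_apply, vecMulVec_apply, eOne_ne D hk]
    rw [h0, h2]
  have hzw2 : ∀ d : Fin D → F, (z - vecMulVec d (eOne F m)).rank
      = finrank F ↥(Submodule.span F {zᵀ 0 - d} ⊔ C) := by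
    intro d
    rw [rank_eq_cols]
    have h0 : (z - vecMulVec d (eOne F m))ᵀ 0 = zᵀ 0 - d := by
      ext k; simp [Matrix.sub_apply, vecMulVec_apply, eOne_zero]
    have h2 : (z - vecMulVec d (eOne F m))ᵀ '' {l | l ≠ 0} = zᵀ '' {l | l ≠ 0} := by
      apply Set.image_congr
      intro l hl
      ext k
      simp [Matrix.sub_apply, vecMulVec_apply, eOne_ne m hl]
    rw [h0, h2]
  -- counting: first set
  have key1 : {w : Matrix (Fin D) (Fin m) F |
      w.rank = 1 ∧ (w - yMat F D m).rank = 1 ∧ (z - w).rank = i - 1}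
      = (fun r : Fin m → F => vecMulVec (eOne F D) (z 0 - r)) '' ↑R := by
    ext w
    simp only [Set.mem_setOf_eq, Set.mem_image, SetLike.mem_coe]
    constructor
    · rintro ⟨hw1, hw2, hw3⟩
      rw [hy] at hw2
      rcases classify w hw1 hw2 with ⟨c, hc0, rfl⟩ | ⟨d, hd0, rfl⟩
      · rw [hzw1 c] at hw3
        rcases finrank_span_sup_cases (z 0 - c) R with ⟨hmem, _⟩ | ⟨_, heq⟩
        · exact ⟨z 0 - c, hmem, by rw [sub_sub_cancel]⟩
        · rw [heq, hRrank] at hw3; omega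
      · exfalso
        rw [hzw2 d] at hw3
        rcases finrank_span_sup_cases (zᵀ 0 - d) C with ⟨_, heq⟩ | ⟨_, heq⟩ <;>
          rw [heq, hCrank] at hw3 <;> omega
    · rintro ⟨r, hrR, rfl⟩
      have hcne : z 0 - r ≠ 0 := by
        intro h
        exact hrow0 (by rwa [sub_eq_zero.mp h])
      refine ⟨rank_vecMulVec_one (eOne_ne_zero D) hcne, ?_, ?_⟩
      · rw [hy, vecMulVec_sub_right]
        apply rank_vecMulVec_one (eOne_ne_zero D)
        intro h
        apply hf1
        have : z 0 - eOne F m = r := by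
          have := sub_eq_zero.mp h
          rw [sub_eq_iff_eq_add] at this ⊢
          rw [this]; abel
        rwa [this]
      · rw [hzw1, sub_sub_cancel, span_sup_of_mem hrR, hRrank]
  -- counting: second set
  have key2 : {w : Matrix (Fin D) (Fin m) F |
      w.rank = 1 ∧ (w - yMat F D m).rank = 1 ∧ (z - w).rank = i + 1}
      = (fun d : Fin D → F => vecMulVec d (eOne F m)) '' (↑C)ᶜ := by
    ext w
    simp only [Set.mem_setOf_eq, Set.mem_image, Set.mem_compl_iff, SetLike.mem_coe]
    constructor
    · rintro ⟨hw1, hw2, hw3⟩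
      rw [hy] at hw2
      rcases classify w hw1 hw2 with ⟨c, hc0, rfl⟩ | ⟨d, hd0, rfl⟩
      · exfalso
        rw [hzw1 c] at hw3
        rcases finrank_span_sup_cases (z 0 - c) R with ⟨_, heq⟩ | ⟨_, heq⟩ <;>
          rw [heq, hRrank] at hw3 <;> omega
      · rw [hzw2 d] at hw3
        rcases finrank_span_sup_cases (zᵀ 0 - d) C with ⟨_, heq⟩ | ⟨hnmem, _⟩
        · rw [heq, hCrank] at hw3; omega
        · refine ⟨d, ?_, rfl⟩
          intro hdC
          exact hnmem (Submodule.sub_mem C hcol0 hdC)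
    · rintro ⟨d, hdC, rfl⟩
      have hdne : d ≠ 0 := fun h => hdC (h ▸ C.zero_mem)
      refine ⟨rank_vecMulVec_one hdne (eOne_ne_zero m), ?_, ?_⟩
      · rw [hy, vecMulVec_sub_left]
        apply rank_vecMulVec_one _ (eOne_ne_zero m)
        intro h
        exact hdC (sub_eq_zero.mp h ▸ he1C)
      · rw [hzw2]
        have hnmem : zᵀ 0 - d ∉ C := by
          intro h
          apply hdC
          have : d = zᵀ 0 - (zᵀ 0 - d) := by abel
          rw [this]
          exact Submodule.sub_mem C hcol0 h
        rw [finrank_span_sup_of_not_mem hnmem, hCrank]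
  -- cardinalities
  have cardR : (↑R : Set (Fin m → F)).ncard = Fintype.card F ^ (i - 1) := by
    rw [← Nat.card_coe_set_eq]
    haveI : Fintype ↥R := Fintype.ofFinite ↥R
    rw [Nat.card_eq_fintype_card]
    rw [show (Fintype.card ↥(↑R : Set (Fin m → F))) = Fintype.card ↥R from
      Fintype.card_congr (Equiv.refl _)]
    rw [card_eq_pow_finrank (K := F) (V := ↥R), hRrank]
  have cardC : (↑C : Set (Fin D → F)).ncard = Fintype.card F ^ i := by
    rw [← Nat.card_coe_set_eq]
    haveI : Fintype ↥C := Fintype.ofFinite ↥C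
    rw [Nat.card_eq_fintype_card]
    rw [show (Fintype.card ↥(↑C : Set (Fin D → F))) = Fintype.card ↥C from
      Fintype.card_congr (Equiv.refl _)]
    rw [card_eq_pow_finrank (K := F) (V := ↥C), hCrank]
  constructor
  · rw [key1]
    have hinj : Function.Injective (fun r : Fin m → F => vecMulVec (eOne F D) (z 0 - r)) := by
      intro r s h
      funext j
      have := congrFun (congrFun h 0) j
      simp only [vecMulVec_apply, eOne_zero, one_mul, Pi.sub_apply] at this
      linear_combination -this
    rw [Set.ncard_image_of_injective _ hinj, cardR]
  · rw [key2]
    have hinj : Function.Injective (fun d : Fin D → F => vecMulVec d (eOne F m)) := by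
      intro d e h
      funext k
      have := congrFun (congrFun h k) 0
      simpa [vecMulVec_apply, eOne_zero] using this
    rw [Set.ncard_image_of_injective _ hinj]
    have hcompl := Set.ncard_add_ncard_compl (↑C : Set (Fin D → F))
    rw [cardC] at hcompl
    have hcard : Nat.card (Fin D → F) = Fintype.card F ^ D := by
      rw [Nat.card_eq_fintype_card, Fintype.card_fun, Fintype.card_fin]
    rw [hcard] at hcompl
    omega


theorem stmt_17 (F : Type) [Field F] [Fintype F] (D N : ℕ)
    (hq : Fintype.card F ≠ 2) (h1 : N > 2 * D) (h2 : 2 * D ≥ 6)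
    (i : ℕ) (hi1 : 1 ≤ i) (hi2 : i ≤ D)
    (z : Matrix (Fin D) (Fin (N - D)) F)
    (hz : z.rank = i) (hzy : (z - yMat F D (N - D)).rank = i)
    (hc : (zeroCol z).rank = i) (hr : (zeroRow z).rank = i - 1)
    (hb : (zeroBoth z).rank = i - 1) :
    ({w : Matrix (Fin D) (Fin (N - D)) F |
        w.rank = 1 ∧ (w - yMat F D (N - D)).rank = 1 ∧ (z - w).rank = i - 1}.ncard : ℚ)
      = (Fintype.card F : ℚ) ^ (i - 1) ∧
    ({w : Matrix (Fin D) (Fin (N - D)) F |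
        w.rank = 1 ∧ (w - yMat F D (N - D)).rank = 1 ∧ (z - w).rank = i + 1}.ncard : ℚ)
      = (Fintype.card F : ℚ) ^ D - (Fintype.card F : ℚ) ^ i := by
  haveI : NeZero D := ⟨by omega⟩
  haveI : NeZero (N - D) := ⟨by omega⟩
  obtain ⟨e1, e2⟩ := main_count hi1 hi2 z hz hzy hc hr
  constructor
  · rw [e1]
    push_cast
    ring
  · rw [e2]
    have hle : Fintype.card F ^ i ≤ Fintype.card F ^ D :=
      Nat.pow_le_pow_right Fintype.card_pos hi2
    push_cast [hle]
    ring

end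
end

section
/- Let y be the D×(N−D) matrix over GF(q) with (1,1)-entry 1 and zeros elsewhere. If z is a matrix with rank(z) = rank(z−y) = i, rank(|z) = i−1, rank(z̄) = i−1, rank(⌜z) = i−1, then the number of common neighbors w of 0 and y (rank(w) = rank(w−y) = 1) satisfying rank(z−w) = i−1 equals 2q^{i−1} − 1, and there are no such w with rank(z−w) = i+1. -/
set_option linter.unusedSectionVars false
set_option linter.unusedVariables false


noncomputable section

open Matrix

open Submodule Module

namespace Aux

variable {F : Type} [Field F] {D m : ℕ} [NeZero D] [NeZero m]

/-- matrix with first column `x`, other columns zero -/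
def colW (x : Fin D → F) : Matrix (Fin D) (Fin m) F :=
  Matrix.of fun i j => if (j : ℕ) = 0 then x i else 0

def col0 (A : Matrix (Fin D) (Fin m) F) : Fin D → F := fun i => A i 0

/-- span of the columns other than the first -/
def Vsp (A : Matrix (Fin D) (Fin m) F) : Submodule F (Fin D → F) :=
  Submodule.span F (Aᵀ '' {j | j ≠ 0})

lemma colW_apply (x : Fin D → F) (i : Fin D) (j : Fin m) :
    colW x i j = if (j : ℕ) = 0 then x i else 0 := rfl

@[simp] lemma colW_zero : (colW 0 : Matrix (Fin D) (Fin m) F) = 0 := by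
  ext i j; simp [colW_apply]

lemma colW_injective : Function.Injective (colW : (Fin D → F) → Matrix (Fin D) (Fin m) F) := by
  intro x y h
  funext i
  have := congrFun (congrFun h i) 0
  simpa [colW_apply] using this

lemma range_transpose_eq (A : Matrix (Fin D) (Fin m) F) :
    Set.range Aᵀ = insert (col0 A) (Aᵀ '' {j | j ≠ 0}) := by
  ext v
  constructor
  · rintro ⟨j, rfl⟩
    by_cases h : j = 0
    · subst h; left; rfl
    · right; exact ⟨j, h, rfl⟩
  · rintro (h | ⟨j, _, rfl⟩)
    · exact ⟨0, h.symm⟩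
    · exact ⟨j, rfl⟩

lemma span_cols_eq (A : Matrix (Fin D) (Fin m) F) :
    Submodule.span F (Set.range Aᵀ) = (F ∙ col0 A) ⊔ Vsp A := by
  rw [range_transpose_eq, Submodule.span_insert]; rfl

lemma rank_eq' (A : Matrix (Fin D) (Fin m) F) :
    A.rank = finrank F ((F ∙ col0 A) ⊔ Vsp A : Submodule F (Fin D → F)) := by
  rw [Matrix.rank_eq_finrank_span_cols, show Set.range A.col = Set.range Aᵀ from rfl, span_cols_eq]



-- general finrank sup span singleton lemmas
lemma finrank_sup_span_le {E : Type} [AddCommGroup E] [Module F E] [FiniteDimensional F E]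
    (V : Submodule F E) (v : E) :
    finrank F ((F ∙ v) ⊔ V : Submodule F E) ≤ finrank F V + 1 := by
  by_cases hv : v = 0
  · subst hv
    rw [Submodule.span_zero_singleton, bot_sup_eq]
    omega
  · have h := Submodule.finrank_sup_add_finrank_inf_eq (F ∙ v) V
    have h1 : finrank F (F ∙ v) = 1 := finrank_span_singleton hv
    omega

lemma finrank_sup_span_eq_iff {E : Type} [AddCommGroup E] [Module F E] [FiniteDimensional F E]
    (V : Submodule F E) (v : E) :
    finrank F ((F ∙ v) ⊔ V : Submodule F E) = finrank F V ↔ v ∈ V := by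
  constructor
  · intro h
    have hle : V ≤ (F ∙ v) ⊔ V := le_sup_right
    have := Submodule.eq_of_le_of_finrank_le hle (le_of_eq h)
    have hv : v ∈ (F ∙ v) ⊔ V :=
      (le_sup_left : (F ∙ v) ≤ _) (Submodule.mem_span_singleton_self v)
    rw [this]; exact hv
  · intro h
    have : (F ∙ v) ≤ V := (Submodule.span_singleton_le_iff_mem v V).mpr h
    rw [sup_eq_right.mpr this]



-- Fin coercion helper
lemma fin_val_zero_iff {n : ℕ} [NeZero n] (j : Fin n) : (j : ℕ) = 0 ↔ j = 0 := by
  constructor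
  · intro h; exact Fin.ext (by simpa using h)
  · rintro rfl; simp

-- columns other than the first of zeroCol A agree with those of A
lemma Vsp_zeroCol (A : Matrix (Fin D) (Fin m) F) : Vsp (zeroCol A) = Vsp A := by
  unfold Vsp
  congr 1
  apply Set.image_congr
  intro j hj
  funext i
  simp only [Set.mem_setOf_eq] at hj
  have : (j : ℕ) ≠ 0 := fun h => hj ((fin_val_zero_iff j).mp h)
  simp [zeroCol, transpose_apply, this, hj]

lemma col0_zeroCol (A : Matrix (Fin D) (Fin m) F) : col0 (zeroCol A) = 0 := by
  funext i; simp [col0, zeroCol]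

lemma rank_zeroCol (A : Matrix (Fin D) (Fin m) F) :
    (zeroCol A).rank = finrank F (Vsp A) := by
  rw [rank_eq', col0_zeroCol, Vsp_zeroCol]
  rw [Submodule.span_zero_singleton, bot_sup_eq]

lemma Vsp_sub_colW (A : Matrix (Fin D) (Fin m) F) (x : Fin D → F) :
    Vsp (A - colW x) = Vsp A := by
  unfold Vsp
  congr 1
  apply Set.image_congr
  intro j hj
  funext i
  simp only [Set.mem_setOf_eq] at hj
  have : (j : ℕ) ≠ 0 := fun h => hj ((fin_val_zero_iff j).mp h)
  simp [colW_apply, transpose_apply, this]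

lemma col0_sub_colW (A : Matrix (Fin D) (Fin m) F) (x : Fin D → F) :
    col0 (A - colW x) = col0 A - x := by
  funext i; simp [col0, colW_apply]

lemma rank_sub_colW (A : Matrix (Fin D) (Fin m) F) (x : Fin D → F) :
    (A - colW x).rank = finrank F ((F ∙ (col0 A - x)) ⊔ Vsp A : Submodule F (Fin D → F)) := by
  rw [rank_eq', col0_sub_colW, Vsp_sub_colW]

lemma yMat_eq_colW : yMat F D m = colW (Pi.single 0 1) := by
  ext i j
  simp only [yMat, colW, of_apply]
  by_cases hj : (j : ℕ) = 0 <;> by_cases hi : (i : ℕ) = 0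
  · rw [if_pos ⟨hi, hj⟩, if_pos hj, Pi.single_apply,
      if_pos ((fin_val_zero_iff i).mp hi)]
  · rw [if_neg (fun h => hi h.1), if_pos hj, Pi.single_apply,
      if_neg (fun h => hi ((fin_val_zero_iff i).mpr h))]
  · rw [if_neg (fun h => hj h.2), if_neg hj]
  · rw [if_neg (fun h => hj h.2), if_neg hj]


lemma Vsp_colW_le_bot (x : Fin D → F) : Vsp (colW x : Matrix (Fin D) (Fin m) F) = ⊥ := by
  unfold Vsp
  rw [Submodule.span_eq_bot]
  rintro v ⟨j, hj, rfl⟩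
  simp only [Set.mem_setOf_eq] at hj
  have : (j : ℕ) ≠ 0 := fun h => hj ((fin_val_zero_iff j).mp h)
  funext i
  simp [colW_apply, transpose_apply, this]

lemma col0_colW (x : Fin D → F) : col0 (colW x : Matrix (Fin D) (Fin m) F) = x := by
  funext i; simp [col0, colW_apply]

lemma rank_colW (x : Fin D → F) (hx : x ≠ 0) : (colW x : Matrix (Fin D) (Fin m) F).rank = 1 := by
  rw [rank_eq', col0_colW, Vsp_colW_le_bot, sup_bot_eq]
  exact finrank_span_singleton hx

lemma colW_sub_y (x : Fin D → F) :
    (colW x : Matrix (Fin D) (Fin m) F) - yMat F D m = colW (x - Pi.single 0 1) := by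
  rw [yMat_eq_colW]
  ext i j
  by_cases hj : (j : ℕ) = 0 <;> simp [colW_apply, hj]

-- transpose lemmas
lemma yMat_transpose : (yMat F D m)ᵀ = yMat F m D := by
  ext i j; simp only [yMat, transpose_apply, of_apply]
  by_cases h : (i:ℕ) = 0 ∧ (j:ℕ) = 0
  · rw [if_pos ⟨h.2, h.1⟩, if_pos h]
  · rw [if_neg (fun hh => h ⟨hh.2, hh.1⟩), if_neg h]

lemma zeroRow_transpose (A : Matrix (Fin D) (Fin m) F) : (zeroRow A)ᵀ = zeroCol Aᵀ := by
  ext i j; simp [zeroRow, zeroCol]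

lemma zeroCol_zeroRow (A : Matrix (Fin D) (Fin m) F) : zeroCol (zeroRow A) = zeroBoth A := by
  ext i j
  simp only [zeroCol, zeroRow, zeroBoth, of_apply]
  by_cases hj : (j : ℕ) = 0 <;> by_cases hi : (i : ℕ) = 0 <;> simp [hi, hj]

def rowW (g : Fin m → F) : Matrix (Fin D) (Fin m) F := (colW g)ᵀ

lemma rowW_apply (g : Fin m → F) (i : Fin D) (j : Fin m) :
    rowW g i j = if (i : ℕ) = 0 then g j else 0 := rfl

lemma rowW_injective : Function.Injective (rowW : (Fin m → F) → Matrix (Fin D) (Fin m) F) :=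
  fun _ _ h => colW_injective (transpose_injective h)


/-- the linear map zeroing out the first coordinate -/
def piL : (Fin D → F) →ₗ[F] (Fin D → F) where
  toFun x := fun i => if (i : ℕ) = 0 then 0 else x i
  map_add' x y := by funext i; by_cases h : i = 0 <;> simp [h]
  map_smul' c x := by funext i; by_cases h : i = 0 <;> simp [h]

lemma piL_apply (x : Fin D → F) (i : Fin D) :
    piL x i = if (i : ℕ) = 0 then 0 else x i := rfl

lemma piL_single : piL (Pi.single (0 : Fin D) (1 : F)) = 0 := by
  funext i
  by_cases h : (i:ℕ) = 0
  · simp [piL_apply, h]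
  · have hne : i ≠ 0 := fun hh => h ((fin_val_zero_iff i).mpr hh)
    rw [piL_apply, if_neg h, Pi.single_apply, if_neg hne, Pi.zero_apply]

lemma piL_col (A : Matrix (Fin D) (Fin m) F) (j : Fin m) :
    piL (Aᵀ j) = (zeroRow A)ᵀ j := by
  funext i; simp [piL_apply, zeroRow, transpose_apply]

lemma map_piL_Vsp (A : Matrix (Fin D) (Fin m) F) :
    Submodule.map piL (Vsp A) = Vsp (zeroRow A) := by
  unfold Vsp
  rw [Submodule.map_span]
  congr 1
  ext v
  simp only [Set.mem_image, Set.mem_setOf_eq]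
  constructor
  · rintro ⟨_, ⟨j, hj, rfl⟩, rfl⟩; exact ⟨j, hj, (piL_col A j).symm⟩
  · rintro ⟨j, hj, rfl⟩; exact ⟨_, ⟨j, hj, rfl⟩, piL_col A j⟩

lemma map_piL_colspan (A : Matrix (Fin D) (Fin m) F) :
    Submodule.map piL (Submodule.span F (Set.range Aᵀ)) =
      Submodule.span F (Set.range (zeroRow A)ᵀ) := by
  rw [Submodule.map_span]
  congr 1
  ext v
  simp only [Set.mem_image, Set.mem_range]
  constructor
  · rintro ⟨_, ⟨j, rfl⟩, rfl⟩; exact ⟨j, (piL_col A j).symm⟩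
  · rintro ⟨j, rfl⟩; exact ⟨_, ⟨j, rfl⟩, piL_col A j⟩

lemma eq_smul_single_of_piL_eq_zero (u : Fin D → F) (h : piL u = 0) :
    u = u 0 • (Pi.single (0 : Fin D) (1 : F) : Fin D → F) := by
  funext i
  by_cases hi : (i:ℕ) = 0
  · have : i = 0 := (fin_val_zero_iff i).mp hi
    subst this; simp
  · have hne : i ≠ 0 := fun hh => hi ((fin_val_zero_iff i).mpr hh)
    have h2 := congrFun h i
    rw [piL_apply, if_neg hi, Pi.zero_apply] at h2
    rw [h2, Pi.smul_apply, Pi.single_apply, if_neg hne, smul_zero]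

-- if piL preserves finrank of V, then e0 ∉ V
lemma single_not_mem_of_finrank_map_eq (V : Submodule F (Fin D → F))
    (h : finrank F (Submodule.map piL V) = finrank F V) :
    Pi.single (0 : Fin D) (1 : F) ∉ V := by
  intro hmem
  set f : V →ₗ[F] (Fin D → F) := piL.comp V.subtype with hf
  have hrange : LinearMap.range f = Submodule.map piL V := by
    rw [hf, LinearMap.range_comp, Submodule.range_subtype]
  have hrn := LinearMap.finrank_range_add_finrank_ker f
  rw [hrange, h] at hrn
  have hker : finrank F (LinearMap.ker f) = 0 := by omega
  have hkbot : LinearMap.ker f = ⊥ := Submodule.finrank_eq_zero.mp hker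
  have : (⟨Pi.single 0 1, hmem⟩ : V) ∈ LinearMap.ker f := by
    simp only [LinearMap.mem_ker, hf, LinearMap.comp_apply, Submodule.subtype_apply]
    exact piL_single
  rw [hkbot, Submodule.mem_bot] at this
  rw [Submodule.mk_eq_zero] at this
  have h2 := congrFun this 0
  simp at h2

-- if piL drops finrank of U by one, then e0-component exists: some nonzero multiple of e0 in U
lemma single_mem_of_finrank_map_add_one (U : Submodule F (Fin D → F))
    (h : finrank F (Submodule.map piL U) + 1 = finrank F U) :
    Pi.single (0 : Fin D) (1 : F) ∈ U := by
  set f : U →ₗ[F] (Fin D → F) := piL.comp U.subtype with hf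
  have hrange : LinearMap.range f = Submodule.map piL U := by
    rw [hf, LinearMap.range_comp, Submodule.range_subtype]
  have hrn := LinearMap.finrank_range_add_finrank_ker f
  rw [hrange] at hrn
  have hker : finrank F (LinearMap.ker f) = 1 := by omega
  have hkne : LinearMap.ker f ≠ ⊥ := by
    intro hb
    rw [hb] at hker
    simp [finrank_bot] at hker
  obtain ⟨u, hu, hune⟩ := Submodule.ne_bot_iff _ |>.mp hkne
  have hpi : piL (u : Fin D → F) = 0 := hu
  have huval : (u : Fin D → F) ≠ 0 := fun hh => hune (Subtype.ext hh)
  have hrep := eq_smul_single_of_piL_eq_zero (u : Fin D → F) hpi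
  have h0 : (u : Fin D → F) 0 ≠ 0 := by
    intro hz
    rw [hz, zero_smul] at hrep
    exact huval hrep
  have hmem : ((u : Fin D → F) 0)⁻¹ • (u : Fin D → F) ∈ U := Submodule.smul_mem U _ u.2
  have heq : ((u : Fin D → F) 0)⁻¹ • (u : Fin D → F)
      = (Pi.single (0 : Fin D) (1 : F) : Fin D → F) := by
    rw [hrep]
    simp [h0]
  rwa [heq] at hmem


lemma yMat_apply (i : Fin D) (j : Fin m) :
    yMat F D m i j = if (i:ℕ) = 0 ∧ (j:ℕ) = 0 then 1 else 0 := rfl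

lemma exists_outer_of_rank_le_one (w : Matrix (Fin D) (Fin m) F) (h : w.rank ≤ 1) :
    ∃ (v : Fin D → F) (t : Fin m → F), ∀ i j, w i j = v i * t j := by
  have hsp : finrank F (Submodule.span F (Set.range wᵀ)) ≤ 1 := by
    rw [show Set.range wᵀ = Set.range w.col from rfl, ← Matrix.rank_eq_finrank_span_cols]; exact h
  by_cases hb : Submodule.span F (Set.range wᵀ) = ⊥
  · refine ⟨0, 0, fun i j => ?_⟩
    have : wᵀ j ∈ Submodule.span F (Set.range wᵀ) :=
      Submodule.subset_span ⟨j, rfl⟩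
    rw [hb, Submodule.mem_bot] at this
    have := congrFun this i
    simpa using this
  · obtain ⟨v, hv, hvne⟩ := Submodule.ne_bot_iff _ |>.mp hb
    have hle : (F ∙ v) ≤ Submodule.span F (Set.range wᵀ) :=
      (Submodule.span_singleton_le_iff_mem v _).mpr hv
    have h1 : finrank F (F ∙ v) = 1 := finrank_span_singleton hvne
    have heq : (F ∙ v) = Submodule.span F (Set.range wᵀ) :=
      Submodule.eq_of_le_of_finrank_le hle (by omega)
    have hcols : ∀ j : Fin m, ∃ c : F, c • v = wᵀ j := by
      intro j
      have : wᵀ j ∈ (F ∙ v) := by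
        rw [heq]; exact Submodule.subset_span ⟨j, rfl⟩
      exact Submodule.mem_span_singleton.mp this
    choose t ht using hcols
    refine ⟨v, t, fun i j => ?_⟩
    have := congrFun (ht j) i
    simp only [Pi.smul_apply, smul_eq_mul, transpose_apply] at this
    rw [← this]; ring

lemma minors (w : Matrix (Fin D) (Fin m) F) (h : w.rank ≤ 1) (i k : Fin D) (j l : Fin m) :
    w i j * w k l = w i l * w k j := by
  obtain ⟨v, t, hvt⟩ := exists_outer_of_rank_le_one w h
  rw [hvt, hvt, hvt, hvt]; ring

lemma struct (w : Matrix (Fin D) (Fin m) F) (h1 : w.rank ≤ 1)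
    (h2 : (w - yMat F D m).rank ≤ 1) :
    (∃ x, w = colW x) ∨ (∃ g, w = rowW g) := by
  have hz : ∀ (i : Fin D) (j : Fin m), (i:ℕ) ≠ 0 → (j:ℕ) ≠ 0 → w i j = 0 := by
    intro i j hi hj
    have m1 := minors w h1 0 i 0 j
    have m2 := minors _ h2 0 i 0 j
    simp only [Matrix.sub_apply, yMat_apply, Fin.val_zero, hi, hj] at m2
    norm_num at m2
    linear_combination m1 - m2
  by_cases hrow : ∀ j : Fin m, (j:ℕ) ≠ 0 → w 0 j = 0
  · left; refine ⟨col0 w, ?_⟩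
    ext i j
    rw [colW_apply]
    by_cases hj : (j:ℕ) = 0
    · have : j = 0 := (fin_val_zero_iff j).mp hj
      subst this; rw [if_pos (show ((0:Fin m):ℕ) = 0 by simp)]; rfl
    · rw [if_neg hj]
      by_cases hi : (i:ℕ) = 0
      · have : i = 0 := (fin_val_zero_iff i).mp hi
        subst this; exact hrow j hj
      · exact hz i j hi hj
  · push_neg at hrow
    obtain ⟨j0, hj0, hwj0⟩ := hrow
    right; refine ⟨fun j => w 0 j, ?_⟩
    have hcol : ∀ i : Fin D, (i:ℕ) ≠ 0 → w i 0 = 0 := by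
      intro i hi
      by_contra hne
      have m1 := minors w h1 0 i 0 j0
      rw [hz i j0 hi hj0, mul_zero] at m1
      exact mul_ne_zero hwj0 hne m1.symm
    ext i j
    rw [rowW_apply]
    by_cases hi : (i:ℕ) = 0
    · have : i = 0 := (fin_val_zero_iff i).mp hi
      subst this; rw [if_pos (show ((0:Fin D):ℕ) = 0 by simp)]
    · rw [if_neg hi]
      by_cases hj : (j:ℕ) = 0
      · have : j = 0 := (fin_val_zero_iff j).mp hj
        subst this; exact hcol i hi
      · exact hz i j hi hj


lemma colW_smul (a : F) (x : Fin D → F) :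
    (colW (a • x) : Matrix (Fin D) (Fin m) F) = a • colW x := by
  ext i j; by_cases hj : (j:ℕ) = 0 <;> simp [colW_apply, hj]

lemma smul_yMat_eq (a : F) : a • yMat F D m = colW (a • (Pi.single (0:Fin D) (1:F) : Fin D → F)) := by
  rw [colW_smul, yMat_eq_colW]

section Master

variable (A : Matrix (Fin D) (Fin m) F) {i : ℕ}

lemma finrank_Vsp (hcA : (zeroCol A).rank = i - 1) : finrank F (Vsp A) = i - 1 := by
  rw [← rank_zeroCol]; exact hcA

lemma col0_not_mem (hi : 1 ≤ i) (hA : A.rank = i) (hcA : (zeroCol A).rank = i - 1) :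
    col0 A ∉ Vsp A := by
  intro hmem
  rw [rank_eq', (finrank_sup_span_eq_iff _ _).mpr hmem, finrank_Vsp A hcA] at hA
  omega

lemma col0_sub_single_not_mem (hi : 1 ≤ i) (hAy : (A - yMat F D m).rank = i)
    (hcA : (zeroCol A).rank = i - 1) :
    col0 A - Pi.single (0:Fin D) (1:F) ∉ Vsp A := by
  intro hmem
  rw [yMat_eq_colW, rank_sub_colW, (finrank_sup_span_eq_iff _ _).mpr hmem,
    finrank_Vsp A hcA] at hAy
  omega

lemma rank_sub_colW_iff (hcA : (zeroCol A).rank = i - 1) (x : Fin D → F) :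
    (A - colW x).rank = i - 1 ↔ col0 A - x ∈ Vsp A := by
  rw [rank_sub_colW, ← finrank_Vsp A hcA]
  exact finrank_sup_span_eq_iff _ _

lemma rank_sub_colW_le (hi : 1 ≤ i) (hcA : (zeroCol A).rank = i - 1) (x : Fin D → F) :
    (A - colW x).rank ≤ i := by
  rw [rank_sub_colW]
  calc finrank F ((F ∙ (col0 A - x)) ⊔ Vsp A : Submodule F (Fin D → F))
      ≤ finrank F (Vsp A) + 1 := finrank_sup_span_le _ _
    _ = i := by rw [finrank_Vsp A hcA]; omega

-- the Pi.single 0 1 is not in Vsp A, from zeroBoth rank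
lemma single_not_mem_Vsp (hcA : (zeroCol A).rank = i - 1)
    (hbA : (zeroBoth A).rank = i - 1) :
    Pi.single (0:Fin D) (1:F) ∉ Vsp A := by
  apply single_not_mem_of_finrank_map_eq
  rw [map_piL_Vsp, ← rank_zeroCol, zeroCol_zeroRow, hbA, finrank_Vsp A hcA]

lemma exists_alpha (hi : 1 ≤ i) (hA : A.rank = i) (hcA : (zeroCol A).rank = i - 1)
    (hrA : (zeroRow A).rank = i - 1) (hbA : (zeroBoth A).rank = i - 1) :
    ∃ α : F, col0 A - α • (Pi.single (0:Fin D) (1:F) : Fin D → F) ∈ Vsp A := by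
  have hU : Pi.single (0:Fin D) (1:F) ∈ Submodule.span F (Set.range Aᵀ) := by
    apply single_mem_of_finrank_map_add_one
    rw [map_piL_colspan, show Set.range (zeroRow A)ᵀ = Set.range (zeroRow A).col from rfl,
      show Set.range Aᵀ = Set.range A.col from rfl, ← Matrix.rank_eq_finrank_span_cols,
      ← Matrix.rank_eq_finrank_span_cols, hrA, hA]
    omega
  rw [span_cols_eq, Submodule.mem_sup] at hU
  obtain ⟨a, ha, b, hb, hab⟩ := hU
  obtain ⟨s, rfl⟩ := Submodule.mem_span_singleton.mp ha
  have hs : s ≠ 0 := by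
    rintro rfl
    rw [zero_smul, zero_add] at hab
    exact single_not_mem_Vsp A hcA hbA (hab ▸ hb)
  refine ⟨s⁻¹, ?_⟩
  have : col0 A - s⁻¹ • (Pi.single (0:Fin D) (1:F) : Fin D → F) = -(s⁻¹ • b) := by
    rw [← hab, smul_add, smul_smul, inv_mul_cancel₀ hs, one_smul]
    abel
  rw [this]
  exact Submodule.neg_mem _ (Submodule.smul_mem _ _ hb)

lemma alpha_unique (hcA : (zeroCol A).rank = i - 1) (hbA : (zeroBoth A).rank = i - 1)
    {α β : F} (hα : col0 A - α • (Pi.single (0:Fin D) (1:F) : Fin D → F) ∈ Vsp A)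
    (hβ : col0 A - β • (Pi.single (0:Fin D) (1:F) : Fin D → F) ∈ Vsp A) : α = β := by
  by_contra hne
  have hd : (α - β) • (Pi.single (0:Fin D) (1:F) : Fin D → F) ∈ Vsp A := by
    have := Submodule.sub_mem _ hβ hα
    have heq : col0 A - β • (Pi.single (0:Fin D) (1:F) : Fin D → F)
        - (col0 A - α • (Pi.single (0:Fin D) (1:F) : Fin D → F))
        = (α - β) • (Pi.single (0:Fin D) (1:F) : Fin D → F) := by
      rw [sub_smul]; abel
    rwa [heq] at this
  have hsub : (α - β) ≠ 0 := sub_ne_zero.mpr hne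
  have : (Pi.single (0:Fin D) (1:F) : Fin D → F) ∈ Vsp A := by
    have h2 := Submodule.smul_mem _ (α - β)⁻¹ hd
    rwa [smul_smul, inv_mul_cancel₀ hsub, one_smul] at h2
  exact single_not_mem_Vsp A hcA hbA this

end Master


lemma zeroBoth_transpose (A : Matrix (Fin D) (Fin m) F) : (zeroBoth A)ᵀ = zeroBoth Aᵀ := by
  ext i j
  simp only [zeroBoth, transpose_apply, of_apply]
  by_cases h : (i:ℕ) = 0 ∨ (j:ℕ) = 0
  · rw [if_pos (h.symm), if_pos h]
  · rw [if_neg (fun hh => h hh.symm), if_neg h]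

lemma sub_rowW_eq (A : Matrix (Fin D) (Fin m) F) (g : Fin m → F) :
    A - rowW g = (Aᵀ - colW g)ᵀ := by
  rw [Matrix.transpose_sub, Matrix.transpose_transpose]; rfl

lemma rowW_sub_y (g : Fin m → F) :
    (rowW g : Matrix (Fin D) (Fin m) F) - yMat F D m = rowW (g - Pi.single 0 1) := by
  unfold rowW
  rw [show yMat F D m = (yMat F m D)ᵀ from (yMat_transpose).symm,
    ← Matrix.transpose_sub, colW_sub_y]

lemma rank_rowW (g : Fin m → F) :
    (rowW g : Matrix (Fin D) (Fin m) F).rank = (colW g : Matrix (Fin m) (Fin D) F).rank :=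
  Matrix.rank_transpose _

lemma smul_yMat_eq_rowW (a : F) :
    a • yMat F D m = (rowW (a • (Pi.single (0:Fin m) (1:F) : Fin m → F)) :
      Matrix (Fin D) (Fin m) F) := by
  unfold rowW
  rw [colW_smul, ← yMat_eq_colW, Matrix.transpose_smul, yMat_transpose]

end Aux

theorem stmt_18 (F : Type) [Field F] [Fintype F] (D N : ℕ)
    (hq : Fintype.card F ≠ 2) (h1 : N > 2 * D) (h2 : 2 * D ≥ 6)
    (i : ℕ) (hi1 : 1 ≤ i) (hi2 : i ≤ D)
    (z : Matrix (Fin D) (Fin (N - D)) F)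
    (hz : z.rank = i) (hzy : (z - yMat F D (N - D)).rank = i)
    (hc : (zeroCol z).rank = i - 1) (hr : (zeroRow z).rank = i - 1)
    (hb : (zeroBoth z).rank = i - 1) :
    ({w : Matrix (Fin D) (Fin (N - D)) F |
        w.rank = 1 ∧ (w - yMat F D (N - D)).rank = 1 ∧ (z - w).rank = i - 1}.ncard : ℚ)
      = 2 * (Fintype.card F : ℚ) ^ (i - 1) - 1 ∧
    {w : Matrix (Fin D) (Fin (N - D)) F |
        w.rank = 1 ∧ (w - yMat F D (N - D)).rank = 1 ∧ (z - w).rank = i + 1} = ∅ := by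
  haveI : NeZero D := ⟨by omega⟩
  haveI : NeZero (N - D) := ⟨by omega⟩
  open Aux in
  -- transpose facts
  have hzT : (zᵀ).rank = i := by rw [Matrix.rank_transpose]; exact hz
  have hzyT : (zᵀ - yMat F (N - D) D).rank = i := by
    rw [← Aux.yMat_transpose, ← Matrix.transpose_sub, Matrix.rank_transpose]; exact hzy
  have hcT : (zeroCol zᵀ).rank = i - 1 := by
    rw [← Aux.zeroRow_transpose, Matrix.rank_transpose]; exact hr
  have hrT : (zeroRow zᵀ).rank = i - 1 := by
    have h1' : (zeroRow zᵀ)ᵀ = zeroCol z := by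
      rw [Aux.zeroRow_transpose, Matrix.transpose_transpose]
    rw [← Matrix.rank_transpose, h1']; exact hc
  have hbT : (zeroBoth zᵀ).rank = i - 1 := by
    rw [← Aux.zeroBoth_transpose, Matrix.rank_transpose]; exact hb
  -- abbreviations
  set e0D : Fin D → F := Pi.single 0 1 with he0D
  set e0m : Fin (N - D) → F := Pi.single 0 1 with he0m
  -- basic non-membership facts
  have hc0 : Aux.col0 z ∉ Aux.Vsp z := Aux.col0_not_mem z hi1 hz hc
  have hc1 : Aux.col0 z - e0D ∉ Aux.Vsp z := Aux.col0_sub_single_not_mem z hi1 hzy hc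
  have hc0T : Aux.col0 zᵀ ∉ Aux.Vsp zᵀ := Aux.col0_not_mem zᵀ hi1 hzT hcT
  have hc1T : Aux.col0 zᵀ - e0m ∉ Aux.Vsp zᵀ := Aux.col0_sub_single_not_mem zᵀ hi1 hzyT hcT
  -- alpha
  obtain ⟨α, hα⟩ := Aux.exists_alpha z hi1 hz hc hr hb
  -- bridging: alpha works on the transposed side as well
  have hαT : Aux.col0 zᵀ - α • e0m ∈ Aux.Vsp zᵀ := by
    have hB : (z - Aux.colW (α • e0D)).rank = i - 1 :=
      (Aux.rank_sub_colW_iff z hc _).mpr hα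
    have hBT : (zᵀ - Aux.colW (α • e0m)).rank = i - 1 := by
      have heq : zᵀ - Aux.colW (α • e0m) = (z - Aux.colW (α • e0D))ᵀ := by
        rw [Matrix.transpose_sub]
        congr 1
        rw [← Aux.smul_yMat_eq, ← Aux.smul_yMat_eq, Matrix.transpose_smul,
          Aux.yMat_transpose]
      rw [heq, Matrix.rank_transpose]; exact hB
    exact (Aux.rank_sub_colW_iff zᵀ hcT _).mp hBT
  -- the parameter sets
  set SA : Set (Fin D → F) := {x | Aux.col0 z - x ∈ Aux.Vsp z} with hSA
  set SB : Set (Fin (N - D) → F) := {g | Aux.col0 zᵀ - g ∈ Aux.Vsp zᵀ} with hSB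
  -- membership facts for SA
  have hA1 : ∀ x ∈ SA, (Aux.colW x : Matrix (Fin D) (Fin (N - D)) F).rank = 1 := by
    intro x hx
    apply Aux.rank_colW
    rintro rfl
    rw [hSA, Set.mem_setOf_eq, sub_zero] at hx
    exact hc0 hx
  have hA2 : ∀ x ∈ SA,
      ((Aux.colW x : Matrix (Fin D) (Fin (N - D)) F) - yMat F D (N - D)).rank = 1 := by
    intro x hx
    rw [Aux.colW_sub_y]
    apply Aux.rank_colW
    intro hxe
    have : x = e0D := by
      have := congrArg (· + (Pi.single (0 : Fin D) (1:F) : Fin D → F)) hxe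
      simpa [sub_add_cancel] using this
    rw [this] at hx
    rw [hSA, Set.mem_setOf_eq] at hx
    exact hc1 hx
  have hA3 : ∀ x ∈ SA, (z - Aux.colW x).rank = i - 1 := by
    intro x hx
    exact (Aux.rank_sub_colW_iff z hc _).mpr hx
  -- membership facts for SB
  have hB1 : ∀ g ∈ SB, (Aux.rowW g : Matrix (Fin D) (Fin (N - D)) F).rank = 1 := by
    intro g hg
    rw [Aux.rank_rowW]
    apply Aux.rank_colW
    rintro rfl
    rw [hSB, Set.mem_setOf_eq, sub_zero] at hg
    exact hc0T hg
  have hB2 : ∀ g ∈ SB,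
      ((Aux.rowW g : Matrix (Fin D) (Fin (N - D)) F) - yMat F D (N - D)).rank = 1 := by
    intro g hg
    rw [Aux.rowW_sub_y, Aux.rank_rowW]
    apply Aux.rank_colW
    intro hge
    have : g = e0m := by
      have := congrArg (· + (Pi.single (0 : Fin (N - D)) (1:F) : Fin (N - D) → F)) hge
      simpa [sub_add_cancel] using this
    rw [this] at hg
    rw [hSB, Set.mem_setOf_eq] at hg
    exact hc1T hg
  have hB3 : ∀ g ∈ SB, (z - Aux.rowW g).rank = i - 1 := by
    intro g hg
    rw [Aux.sub_rowW_eq, Matrix.rank_transpose]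
    exact (Aux.rank_sub_colW_iff zᵀ hcT _).mpr hg
  -- the set equality
  have hSet : {w : Matrix (Fin D) (Fin (N - D)) F |
        w.rank = 1 ∧ (w - yMat F D (N - D)).rank = 1 ∧ (z - w).rank = i - 1}
      = Aux.colW '' SA ∪ Aux.rowW '' SB := by
    ext w
    simp only [Set.mem_setOf_eq, Set.mem_union, Set.mem_image]
    constructor
    · rintro ⟨hw1, hw2, hw3⟩
      rcases Aux.struct w (le_of_eq hw1) (le_of_eq hw2) with ⟨x, rfl⟩ | ⟨g, rfl⟩
      · left
        exact ⟨x, (Aux.rank_sub_colW_iff z hc _).mp hw3, rfl⟩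
      · right
        refine ⟨g, ?_, rfl⟩
        rw [Aux.sub_rowW_eq, Matrix.rank_transpose] at hw3
        exact (Aux.rank_sub_colW_iff zᵀ hcT _).mp hw3
    · rintro (⟨x, hx, rfl⟩ | ⟨g, hg, rfl⟩)
      · exact ⟨hA1 x hx, hA2 x hx, hA3 x hx⟩
      · exact ⟨hB1 g hg, hB2 g hg, hB3 g hg⟩
  -- intersection is a single point
  have hInt : (Aux.colW '' SA) ∩ (Aux.rowW '' SB) = {α • yMat F D (N - D)} := by
    ext w
    simp only [Set.mem_inter_iff, Set.mem_image, Set.mem_singleton_iff]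
    constructor
    · rintro ⟨⟨x, hx, rfl⟩, ⟨g, hg, hgw⟩⟩
      have hx0 : ∀ k : Fin D, (k : ℕ) ≠ 0 → x k = 0 := by
        intro k hk
        have hcf := congrFun (congrFun hgw k) 0
        rw [Aux.rowW_apply, Aux.colW_apply, if_neg hk,
          if_pos (show ((0 : Fin (N - D)) : ℕ) = 0 by simp)] at hcf
        exact hcf.symm
      have hxe : x = x 0 • e0D := by
        funext k
        by_cases hk : (k : ℕ) = 0
        · have : k = 0 := (Aux.fin_val_zero_iff k).mp hk
          subst this
          rw [he0D, Pi.smul_apply, Pi.single_eq_same, smul_eq_mul, mul_one]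
        · have hkne : k ≠ 0 := fun hh => hk ((Aux.fin_val_zero_iff k).mpr hh)
          rw [hx0 k hk, he0D, Pi.smul_apply, Pi.single_apply, if_neg hkne, smul_zero]
      have hmem : Aux.col0 z - x 0 • e0D ∈ Aux.Vsp z := by
        rw [hSA, Set.mem_setOf_eq, hxe] at hx
        exact hx
      have hxα : x 0 = α := Aux.alpha_unique z hc hb hmem hα
      rw [hxe, hxα, Aux.smul_yMat_eq]
    · rintro rfl
      constructor
      · exact ⟨α • e0D, hα, (Aux.smul_yMat_eq α).symm⟩
      · exact ⟨α • e0m, hαT, (Aux.smul_yMat_eq_rowW α).symm⟩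
  -- cardinality of SA and SB
  have hVcard : ∀ (n : ℕ) [NeZero n] (B : Matrix (Fin n) (Fin (0)) F), True := fun _ _ _ => trivial
  have hSAcard : SA.ncard = Fintype.card F ^ (i - 1) := by
    have himg : SA = (fun v => Aux.col0 z - v) '' ((Aux.Vsp z : Submodule F (Fin D → F)) :
        Set (Fin D → F)) := by
      ext x
      simp only [Set.mem_image, SetLike.mem_coe, hSA, Set.mem_setOf_eq]
      constructor
      · intro hx; exact ⟨Aux.col0 z - x, hx, by abel⟩
      · rintro ⟨v, hv, rfl⟩
        simpa using hv
    rw [himg, Set.ncard_image_of_injective _ (sub_right_injective)]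
    haveI : Fintype (Aux.Vsp z) := Fintype.ofFinite _
    rw [← Nat.card_coe_set_eq]
    have hcoe : Nat.card ((Aux.Vsp z : Submodule F (Fin D → F)) : Set (Fin D → F))
        = Nat.card (Aux.Vsp z) := rfl
    rw [hcoe, Nat.card_eq_fintype_card, card_eq_pow_finrank (K := F), Aux.finrank_Vsp z hc]
  have hSBcard : SB.ncard = Fintype.card F ^ (i - 1) := by
    have himg : SB = (fun v => Aux.col0 zᵀ - v) '' ((Aux.Vsp zᵀ : Submodule F (Fin (N - D) → F)) :
        Set (Fin (N - D) → F)) := by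
      ext g
      simp only [Set.mem_image, SetLike.mem_coe, hSB, Set.mem_setOf_eq]
      constructor
      · intro hg; exact ⟨Aux.col0 zᵀ - g, hg, by abel⟩
      · rintro ⟨v, hv, rfl⟩
        simpa using hv
    rw [himg, Set.ncard_image_of_injective _ (sub_right_injective)]
    haveI : Fintype (Aux.Vsp zᵀ) := Fintype.ofFinite _
    rw [← Nat.card_coe_set_eq]
    have hcoe : Nat.card ((Aux.Vsp zᵀ : Submodule F (Fin (N - D) → F)) : Set (Fin (N - D) → F))
        = Nat.card (Aux.Vsp zᵀ) := rfl
    rw [hcoe, Nat.card_eq_fintype_card, card_eq_pow_finrank (K := F), Aux.finrank_Vsp zᵀ hcT]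
  -- counting
  have hcount := Set.ncard_union_add_ncard_inter (Aux.colW '' SA) (Aux.rowW '' SB)
    (Set.toFinite _) (Set.toFinite _)
  rw [hInt, Set.ncard_singleton, Set.ncard_image_of_injective _ Aux.colW_injective,
    Set.ncard_image_of_injective _ Aux.rowW_injective, hSAcard, hSBcard] at hcount
  constructor
  · rw [hSet]
    have hqpos : 1 ≤ Fintype.card F ^ (i - 1) := Nat.one_le_pow _ _ Fintype.card_pos
    have : ((Aux.colW '' SA ∪ Aux.rowW '' SB).ncard : ℚ) + 1
        = (Fintype.card F : ℚ) ^ (i - 1) + (Fintype.card F : ℚ) ^ (i - 1) := by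
      exact_mod_cast congrArg (fun n : ℕ => (n : ℚ)) hcount
    linarith
  · ext w
    simp only [Set.mem_setOf_eq, Set.mem_empty_iff_false, iff_false, not_and]
    intro hw1 hw2 hw3
    rcases Aux.struct w (le_of_eq hw1) (le_of_eq hw2) with ⟨x, rfl⟩ | ⟨g, rfl⟩
    · have := Aux.rank_sub_colW_le z hi1 hc x
      omega
    · have : (z - Aux.rowW g).rank ≤ i := by
        rw [Aux.sub_rowW_eq, Matrix.rank_transpose]
        exact Aux.rank_sub_colW_le zᵀ hi1 hcT g
      omega


end
end

section
/- The set of common neighbors of two adjacent vertices x, y of the bilinear forms graph H_q(D, N−D) has cardinality a_1 = q^{N−D} + q^D − q − 2; equivalently, taking x = 0 and y with (1,1)-entry 1 and zeros elsewhere, the number of matrices w with rank(w) = 1 and rank(w−y) = 1 equals q^{N−D} + q^D − q − 2. -/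
noncomputable section

open Matrix

namespace Stmt19Aux

open Module Submodule

variable {F : Type} [Field F] {D m : ℕ}

lemma rank_one_of_line (w : Matrix (Fin D) (Fin m) F) (v : Fin m → F) (h0 : w ≠ 0)
    (h : ∀ i, ∃ c : F, w i = c • v) : w.rank = 1 := by
  have hv : v ≠ 0 := by
    rintro rfl
    apply h0; ext i j
    obtain ⟨c, hc⟩ := h i
    rw [show w i j = (c • (0 : Fin m → F)) j from congrFun hc j]; simp
  have hw : w.rank = finrank F (span F (Set.range w)) := by
    have h2 := rank_eq_finrank_span_cols wᵀ
    change wᵀ.rank = finrank F (span F (Set.range w)) at h2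
    rw [← h2, rank_transpose]
  have hle : span F (Set.range w) ≤ span F {v} := by
    rw [span_le]; rintro _ ⟨i, rfl⟩
    obtain ⟨c, hc⟩ := h i
    exact mem_span_singleton.mpr ⟨c, hc.symm⟩
  have h1 : w.rank ≤ 1 := by
    rw [hw]
    calc finrank F (span F (Set.range w)) ≤ finrank F (span F {v}) := finrank_mono hle
    _ = 1 := finrank_span_singleton hv
  have h2 : w.rank ≠ 0 := by
    intro hz
    apply h0
    rw [hw] at hz
    have hb : span F (Set.range w) = ⊥ := finrank_eq_zero.mp hz
    ext i j
    have hi : w i ∈ (⊥ : Submodule F (Fin m → F)) :=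
      hb ▸ subset_span (Set.mem_range_self i)
    rw [mem_bot] at hi
    exact congrFun hi j
  omega

lemma line_of_rank_one {w : Matrix (Fin D) (Fin m) F} (h : w.rank = 1) :
    ∃ v : Fin m → F, ∀ i, ∃ c : F, w i = c • v := by
  have h' : finrank F (span F (Set.range w)) = 1 := by
    have h2 := rank_eq_finrank_span_cols wᵀ
    change wᵀ.rank = finrank F (span F (Set.range w)) at h2
    rw [← h2, rank_transpose]; exact h
  obtain ⟨⟨v, hvmem⟩, hv0, hall⟩ := finrank_eq_one_iff'.mp h'
  refine ⟨v, fun i => ?_⟩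
  obtain ⟨c, hc⟩ := hall ⟨w i, subset_span (Set.mem_range_self i)⟩
  exact ⟨c, (congrArg Subtype.val hc).symm⟩

lemma rank_row_supported (hD : 0 < D) (w : Matrix (Fin D) (Fin m) F) (h0 : w ≠ 0)
    (h : ∀ (i : Fin D) (j : Fin m), (i : ℕ) ≠ 0 → w i j = 0) : w.rank = 1 := by
  apply rank_one_of_line w (w ⟨0, hD⟩) h0
  intro i
  by_cases hi : (i : ℕ) = 0
  · exact ⟨1, by rw [show i = ⟨0, hD⟩ from Fin.ext hi]; simp⟩
  · exact ⟨0, by funext j; simp [h i j hi]⟩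

lemma rank_col_supported (hm : 0 < m) (w : Matrix (Fin D) (Fin m) F) (h0 : w ≠ 0)
    (h : ∀ (i : Fin D) (j : Fin m), (j : ℕ) ≠ 0 → w i j = 0) : w.rank = 1 := by
  apply rank_one_of_line w (fun j => if (j : ℕ) = 0 then 1 else 0) h0
  intro i
  refine ⟨w i ⟨0, hm⟩, ?_⟩
  funext j
  by_cases hj : (j : ℕ) = 0
  · rw [show j = ⟨0, hm⟩ from Fin.ext hj]; simp
  · simp [h i j hj, hj]

theorem countKey (F : Type) [Field F] [Fintype F] (D m : ℕ) (hD : 0 < D) (hm : 0 < m) :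
    {w : Matrix (Fin D) (Fin m) F | w.rank = 1 ∧ (w - yMat F D m).rank = 1}.ncard
      + (Fintype.card F - 2)
    = (Fintype.card F ^ m - 2) + (Fintype.card F ^ D - 2) := by
  classical
  set E := yMat F D m with hEdef
  set f1 : Fin m → F := fun j => if (j : ℕ) = 0 then 1 else 0 with hf1def
  set e1 : Fin D → F := fun i => if (i : ℕ) = 0 then 1 else 0 with he1def
  have hf1ne : f1 ≠ 0 := by
    intro h
    have := congrFun h ⟨0, hm⟩
    simp [hf1def] at this
  set A : Set (Matrix (Fin D) (Fin m) F) :=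
    {w | w ≠ 0 ∧ w ≠ E ∧ ∀ (i : Fin D) (j : Fin m), (i : ℕ) ≠ 0 → w i j = 0} with hAdef
  set B : Set (Matrix (Fin D) (Fin m) F) :=
    {w | w ≠ 0 ∧ w ≠ E ∧ ∀ (i : Fin D) (j : Fin m), (j : ℕ) ≠ 0 → w i j = 0} with hBdef
  -- entries of E
  have hEentry : ∀ i j, E i j = if (i : ℕ) = 0 ∧ (j : ℕ) = 0 then 1 else 0 := fun i j => rfl
  -- the set is A ∪ B
  have hS : {w : Matrix (Fin D) (Fin m) F | w.rank = 1 ∧ (w - E).rank = 1} = A ∪ B := by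
    ext w
    simp only [Set.mem_setOf_eq, Set.mem_union, hAdef, hBdef]
    constructor
    · rintro ⟨hw, hwE⟩
      have hw0 : w ≠ 0 := by rintro rfl; rw [rank_zero] at hw; exact one_ne_zero hw.symm
      have hwEne : w ≠ E := by
        rintro rfl; rw [sub_self, rank_zero] at hwE; exact one_ne_zero hwE.symm
      by_cases hA : ∀ (i : Fin D) (j : Fin m), (i : ℕ) ≠ 0 → w i j = 0
      · exact Or.inl ⟨hw0, hwEne, hA⟩
      · right
        refine ⟨hw0, hwEne, ?_⟩
        push_neg at hA
        obtain ⟨i, j, hi, hij⟩ := hA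
        obtain ⟨v, hv⟩ := line_of_rank_one hw
        obtain ⟨v', hv'⟩ := line_of_rank_one hwE
        have hErow : E i = 0 := by funext j'; simp [hEentry, hi]
        have hrowi : (w - E) i = w i := by
          funext j'
          rw [Matrix.sub_apply, show E i j' = 0 from congrFun hErow j', sub_zero]
        obtain ⟨ci, hci⟩ := hv i
        obtain ⟨ci', hci'⟩ := hv' i
        rw [hrowi] at hci'
        have hwine : w i ≠ 0 := fun h => hij (congrFun h j)
        have hcine : ci ≠ 0 := by rintro rfl; rw [zero_smul] at hci; exact hwine hci
        have hci'ne : ci' ≠ 0 := by rintro rfl; rw [zero_smul] at hci'; exact hwine hci'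
        have hv'eq : v' = (ci'⁻¹ * ci) • v := by
          calc v' = ci'⁻¹ • (ci' • v') := by
                rw [smul_smul, inv_mul_cancel₀ hci'ne, one_smul]
          _ = ci'⁻¹ • (ci • v) := by rw [← hci', hci]
          _ = (ci'⁻¹ * ci) • v := smul_smul _ _ _
        obtain ⟨c0, hc0⟩ := hv ⟨0, hD⟩
        obtain ⟨c0', hc0'⟩ := hv' ⟨0, hD⟩
        have hErow0 : E ⟨0, hD⟩ = f1 := by
          funext j'; simp [hEentry, hf1def]
        have hrow0 : (w - E) ⟨0, hD⟩ = w ⟨0, hD⟩ - f1 := by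
          funext j'
          rw [Matrix.sub_apply, show E ⟨0, hD⟩ j' = f1 j' from congrFun hErow0 j']
          rfl
        have hf1eq : f1 = (c0 - c0' * (ci'⁻¹ * ci)) • v := by
          have h1 : w ⟨0, hD⟩ - f1 = (c0' * (ci'⁻¹ * ci)) • v := by
            rw [← hrow0, hc0', hv'eq, smul_smul]
          calc f1 = w ⟨0, hD⟩ - (w ⟨0, hD⟩ - f1) := (sub_sub_cancel _ _).symm
          _ = c0 • v - (c0' * (ci'⁻¹ * ci)) • v := by rw [← hc0, ← h1]
          _ = (c0 - c0' * (ci'⁻¹ * ci)) • v := (sub_smul _ _ _).symm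
        have hcoeff : c0 - c0' * (ci'⁻¹ * ci) ≠ 0 := by
          rintro h
          rw [h, zero_smul] at hf1eq
          exact hf1ne hf1eq
        intro i' j' hj'
        have hvj' : v j' = 0 := by
          have := congrFun hf1eq j'
          simp only [hf1def, hj', if_neg hj', Pi.smul_apply, smul_eq_mul] at this
          rcases mul_eq_zero.mp this.symm with h | h
          · exact absurd h hcoeff
          · exact h
        obtain ⟨c, hc⟩ := hv i'
        rw [show w i' j' = (c • v) j' from congrFun hc j', Pi.smul_apply, hvj',
          smul_eq_mul, mul_zero]
    · rintro (⟨h0, hEne, hsupp⟩ | ⟨h0, hEne, hsupp⟩)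
      · refine ⟨rank_row_supported hD w h0 hsupp, ?_⟩
        apply rank_row_supported hD _ (sub_ne_zero.mpr hEne)
        intro i j hi
        rw [Matrix.sub_apply, hsupp i j hi, hEentry]
        simp [hi]
      · refine ⟨rank_col_supported hm w h0 hsupp, ?_⟩
        apply rank_col_supported hm _ (sub_ne_zero.mpr hEne)
        intro i j hj
        rw [Matrix.sub_apply, hsupp i j hj, hEentry]
        simp [hj]
  -- cardinality of A
  set g : (Fin m → F) → Matrix (Fin D) (Fin m) F :=
    fun r => Matrix.of fun i j => if (i : ℕ) = 0 then r j else 0 with hgdef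
  have hginj : Function.Injective g := by
    intro r s h
    funext j
    have := congrFun (congrFun h ⟨0, hD⟩) j
    simpa [hgdef] using this
  have hg0 : g 0 = 0 := by funext i j; simp [hgdef]
  have hgf1 : g f1 = E := by
    funext i j
    simp only [hgdef, Matrix.of_apply, hEentry, hf1def]
    by_cases hi : (i : ℕ) = 0 <;> simp [hi]
  have hAeq : A = g '' (Set.univ \ {0, f1}) := by
    ext w
    simp only [hAdef, Set.mem_setOf_eq, Set.mem_image, Set.mem_diff, Set.mem_univ, true_and,
      Set.mem_insert_iff, Set.mem_singleton_iff, not_or]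
    constructor
    · rintro ⟨h0, hEne, hsupp⟩
      refine ⟨w ⟨0, hD⟩, ?_, ?_⟩
      · constructor
        · intro h; apply h0
          ext i j
          by_cases hi : (i : ℕ) = 0
          · rw [show i = ⟨0, hD⟩ from Fin.ext hi]
            exact congrFun h j
          · simp [hsupp i j hi]
        · intro h; apply hEne
          ext i j
          by_cases hi : (i : ℕ) = 0
          · rw [show i = ⟨0, hD⟩ from Fin.ext hi, show w ⟨0,hD⟩ j = f1 j from congrFun h j,
              hEentry]
            simp [hf1def]
          · rw [hsupp i j hi, hEentry]; simp [hi]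
      · ext i j
        simp only [hgdef, Matrix.of_apply]
        by_cases hi : (i : ℕ) = 0
        · rw [if_pos hi, show i = ⟨0, hD⟩ from Fin.ext hi]
        · rw [if_neg hi, hsupp i j hi]
    · rintro ⟨r, ⟨hr0, hrf1⟩, rfl⟩
      refine ⟨?_, ?_, ?_⟩
      · rw [← hg0]; exact fun h => hr0 (hginj h)
      · rw [← hgf1]; exact fun h => hrf1 (hginj h)
      · intro i j hi; simp [hgdef, hi]
  -- cardinality of B
  set gc : (Fin D → F) → Matrix (Fin D) (Fin m) F :=
    fun c => Matrix.of fun i j => if (j : ℕ) = 0 then c i else 0 with hgcdef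
  have hgcinj : Function.Injective gc := by
    intro r s h
    funext i
    have := congrFun (congrFun h i) ⟨0, hm⟩
    simpa [hgcdef] using this
  have hgc0 : gc 0 = 0 := by funext i j; simp [hgcdef]
  have hgce1 : gc e1 = E := by
    funext i j
    simp only [hgcdef, Matrix.of_apply, hEentry, he1def]
    by_cases hj : (j : ℕ) = 0 <;> simp [hj, And.comm]
  have hBeq : B = gc '' (Set.univ \ {0, e1}) := by
    ext w
    simp only [hBdef, Set.mem_setOf_eq, Set.mem_image, Set.mem_diff, Set.mem_univ, true_and,
      Set.mem_insert_iff, Set.mem_singleton_iff, not_or]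
    constructor
    · rintro ⟨h0, hEne, hsupp⟩
      refine ⟨fun i => w i ⟨0, hm⟩, ?_, ?_⟩
      · constructor
        · intro h; apply h0
          ext i j
          by_cases hj : (j : ℕ) = 0
          · rw [show j = ⟨0, hm⟩ from Fin.ext hj]
            exact congrFun h i
          · simp [hsupp i j hj]
        · intro h; apply hEne
          ext i j
          by_cases hj : (j : ℕ) = 0
          · rw [show j = ⟨0, hm⟩ from Fin.ext hj,
              show w i ⟨0, hm⟩ = e1 i from congrFun h i, hEentry]
            simp [he1def, And.comm]
          · rw [hsupp i j hj, hEentry]; simp [hj]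
      · ext i j
        simp only [hgcdef, Matrix.of_apply]
        by_cases hj : (j : ℕ) = 0
        · rw [if_pos hj, show j = ⟨0, hm⟩ from Fin.ext hj]
        · rw [if_neg hj, hsupp i j hj]
    · rintro ⟨r, ⟨hr0, hre1⟩, rfl⟩
      refine ⟨?_, ?_, ?_⟩
      · rw [← hgc0]; exact fun h => hr0 (hgcinj h)
      · rw [← hgce1]; exact fun h => hre1 (hgcinj h)
      · intro i j hj; simp [hgcdef, hj]
  -- intersection
  have hIeq : A ∩ B = (fun a : F => a • E) '' (Set.univ \ {0, 1}) := by
    ext w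
    simp only [Set.mem_inter_iff, hAdef, hBdef, Set.mem_setOf_eq, Set.mem_image, Set.mem_diff,
      Set.mem_univ, true_and, Set.mem_insert_iff, Set.mem_singleton_iff, not_or]
    constructor
    · rintro ⟨⟨h0, hEne, hrow⟩, ⟨-, -, hcol⟩⟩
      have hw : w = w ⟨0, hD⟩ ⟨0, hm⟩ • E := by
        ext i j
        rw [Matrix.smul_apply, hEentry, smul_eq_mul]
        by_cases hi : (i : ℕ) = 0
        · by_cases hj : (j : ℕ) = 0
          · rw [if_pos ⟨hi, hj⟩, mul_one,
              show i = ⟨0, hD⟩ from Fin.ext hi, show j = ⟨0, hm⟩ from Fin.ext hj]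
          · rw [hcol i j hj, if_neg (fun h => hj h.2), mul_zero]
        · rw [hrow i j hi, if_neg (fun h => hi h.1), mul_zero]
      refine ⟨w ⟨0, hD⟩ ⟨0, hm⟩, ⟨?_, ?_⟩, hw.symm⟩
      · intro h; apply h0; rw [hw, h, zero_smul]
      · intro h; apply hEne; rw [hw, h, one_smul]
    · rintro ⟨a, ⟨ha0, ha1⟩, rfl⟩
      have h0 : a • E ≠ 0 := by
        intro h
        have := congrFun (congrFun h ⟨0, hD⟩) ⟨0, hm⟩
        rw [Matrix.smul_apply, hEentry] at this
        simp at this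
        exact ha0 this
      have hEne : a • E ≠ E := by
        intro h
        have := congrFun (congrFun h ⟨0, hD⟩) ⟨0, hm⟩
        rw [Matrix.smul_apply, hEentry] at this
        simp at this
        exact ha1 this
      refine ⟨⟨h0, hEne, ?_⟩, h0, hEne, ?_⟩
      · intro i j hi
        rw [Matrix.smul_apply, hEentry, if_neg (fun h => hi h.1), smul_zero]
      · intro i j hj
        rw [Matrix.smul_apply, hEentry, if_neg (fun h => hj h.2), smul_zero]
  have hsmulinj : Function.Injective (fun a : F => a • E) := by
    intro a b h
    have h2 : (a • E) ⟨0, hD⟩ ⟨0, hm⟩ = (b • E) ⟨0, hD⟩ ⟨0, hm⟩ := by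
      exact congrFun (congrFun h ⟨0, hD⟩) ⟨0, hm⟩
    rw [Matrix.smul_apply, Matrix.smul_apply, hEentry] at h2
    simpa using h2
  -- cardinalities
  have hcardA : A.ncard = Fintype.card F ^ m - 2 := by
    rw [hAeq, Set.ncard_image_of_injective _ hginj,
      Set.ncard_diff (Set.subset_univ _), Set.ncard_univ,
      Set.ncard_pair (Ne.symm hf1ne), Nat.card_eq_fintype_card, Fintype.card_fun,
      Fintype.card_fin]
  have he1ne : e1 ≠ 0 := by
    intro h
    have := congrFun h ⟨0, hD⟩
    simp [he1def] at this
  have hcardB : B.ncard = Fintype.card F ^ D - 2 := by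
    rw [hBeq, Set.ncard_image_of_injective _ hgcinj,
      Set.ncard_diff (Set.subset_univ _), Set.ncard_univ,
      Set.ncard_pair (Ne.symm he1ne), Nat.card_eq_fintype_card, Fintype.card_fun,
      Fintype.card_fin]
  have hcardI : (A ∩ B).ncard = Fintype.card F - 2 := by
    rw [hIeq, Set.ncard_image_of_injective _ hsmulinj,
      Set.ncard_diff (Set.subset_univ _), Set.ncard_univ,
      Set.ncard_pair (zero_ne_one), Nat.card_eq_fintype_card]
  have huni := Set.ncard_union_add_ncard_inter A B (Set.toFinite A) (Set.toFinite B)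
  rw [hS, ← hcardI, huni, hcardA, hcardB]

end Stmt19Aux

theorem stmt_19 (F : Type) [Field F] [Fintype F] (D N : ℕ)
    (h1 : N > 2 * D) (h2 : 2 * D ≥ 6) :
    ({w : Matrix (Fin D) (Fin (N - D)) F |
        w.rank = 1 ∧ (w - yMat F D (N - D)).rank = 1}.ncard : ℚ)
      = (Fintype.card F : ℚ) ^ (N - D) + (Fintype.card F : ℚ) ^ D
          - (Fintype.card F : ℚ) - 2 := by
  have hD : 0 < D := by omega
  have hm : 0 < N - D := by omega
  have key := Stmt19Aux.countKey F D (N - D) hD hm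
  have hq : 2 ≤ Fintype.card F := Fintype.one_lt_card
  have h1' : 2 ≤ Fintype.card F ^ (N - D) :=
    le_trans hq (Nat.le_self_pow (by omega) _)
  have h2' : 2 ≤ Fintype.card F ^ D := le_trans hq (Nat.le_self_pow (by omega) _)
  have hcast := congrArg (Nat.cast : ℕ → ℚ) key
  rw [Nat.cast_add, Nat.cast_add, Nat.cast_sub hq, Nat.cast_sub h1', Nat.cast_sub h2'] at hcast
  push_cast at hcast
  linarith

end
end
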